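/- arXiv:2010.06071 — 4 statements merged into one kernel-verified Lean document; each statement's English description precedes it below -/
import Mathlib

section
/- For two nonzero polynomials f₁, f₂ in two variables over ℂ, the mixed volume MV(f₁,f₂) := vol₂(N(f₁)+N(f₂)) − vol₂(N(f₁)) − vol₂(N(f₂)) is zero if and only if either the Newton polytopes N(f₁) and N(f₂) are parallel segments or at least one of N(f₁), N(f₂) is a single point. -/
open MeasureTheory Pointwise
open scoped ENNReal


/-- The Newton polytope of a polynomial: the convex hull of its support in `ℝⁿ`. -/
noncomputable def newtonPolytope {n : ℕ} (f : MvPolynomial (Fin n) ℂ) : Set (Fin n → ℝ) :=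
  convexHull ℝ ((fun (α : Fin n →₀ ℕ) (i : Fin n) => (α i : ℝ)) '' (f.support : Set (Fin n →₀ ℕ)))

/-- Two-dimensional volume (Lebesgue measure). -/
noncomputable def vol2 (A : Set (Fin 2 → ℝ)) : ℝ := (volume A).toReal

/-- The mixed volume of a pair of polynomials in two variables. -/
noncomputable def MV (f g : MvPolynomial (Fin 2) ℂ) : ℝ :=
  vol2 (newtonPolytope f + newtonPolytope g) - vol2 (newtonPolytope f) - vol2 (newtonPolytope g)

/-- `A` is the segment with distinct endpoints `a`, `b`. -/
def IsSeg (A : Set (Fin 2 → ℝ)) (a b : Fin 2 → ℝ) : Prop := a ≠ b ∧ A = segment ℝ a b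

abbrev E2 := Fin 2 → ℝ

noncomputable example : MeasureSpace E2 := inferInstance
example : (volume : Measure E2).IsAddHaarMeasure := inferInstance
example : BorelSpace E2 := inferInstance

/-- cross product functional: `crossL v w = v 0 * w 1 - v 1 * w 0`. -/
noncomputable def crossL (v : E2) : E2 →ₗ[ℝ] ℝ :=
  v 0 • (LinearMap.proj 1 : E2 →ₗ[ℝ] ℝ) - v 1 • (LinearMap.proj 0 : E2 →ₗ[ℝ] ℝ)

lemma crossL_apply (v w : E2) : crossL v w = v 0 * w 1 - v 1 * w 0 := rfl

lemma crossL_self (v : E2) : crossL v v = 0 := by simp [crossL_apply, mul_comm]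

lemma crossL_ne_zero {v : E2} (hv : v ≠ 0) : crossL v ≠ 0 := by
  intro h
  apply hv
  have h0 := congrFun (congrArg DFunLike.coe h) (fun i => if i = 1 then 1 else 0)
  have h1 := congrFun (congrArg DFunLike.coe h) (fun i => if i = 0 then 1 else 0)
  simp [crossL_apply] at h0 h1
  funext i
  fin_cases i <;> simp [h0, h1]

noncomputable def dotL (v : E2) : E2 →ₗ[ℝ] ℝ :=
  v 0 • (LinearMap.proj 0 : E2 →ₗ[ℝ] ℝ) + v 1 • (LinearMap.proj 1 : E2 →ₗ[ℝ] ℝ)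

lemma dotL_apply (v w : E2) : dotL v w = v 0 * w 0 + v 1 * w 1 := rfl

lemma dotL_self_pos {v : E2} (hv : v ≠ 0) : 0 < dotL v v := by
  rw [dotL_apply]
  have hne : v 0 ≠ 0 ∨ v 1 ≠ 0 := by
    by_contra h
    push_neg at h
    exact hv (funext fun i => by fin_cases i <;> simp [h.1, h.2])
  rcases hne with h | h
  · nlinarith [mul_self_nonneg (v 0), mul_self_nonneg (v 1), mul_self_pos.2 h]
  · nlinarith [mul_self_nonneg (v 0), mul_self_nonneg (v 1), mul_self_pos.2 h]

lemma levelSet_null {l : E2 →ₗ[ℝ] ℝ} (hl : l ≠ 0) (c : ℝ) :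
    volume {x : E2 | l x = c} = 0 := by
  rcases Set.eq_empty_or_nonempty {x : E2 | l x = c} with h | ⟨x₀, hx₀⟩
  · simp [h]
  · have hx₀' : l x₀ = c := hx₀
    have hset : {x : E2 | l x = c} = (AffineSubspace.mk' x₀ (LinearMap.ker l) : Set E2) := by
      ext x
      simp only [Set.mem_setOf_eq, SetLike.mem_coe, AffineSubspace.mem_mk',
        LinearMap.mem_ker, vsub_eq_sub, map_sub, hx₀']
      constructor <;> intro h <;> linarith
    rw [hset]
    refine Measure.addHaar_affineSubspace volume _ ?_
    intro htop
    apply hl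
    have : LinearMap.ker l = ⊤ := by
      rw [← AffineSubspace.direction_mk' x₀ (LinearMap.ker l), htop]
      simp
    exact LinearMap.ker_eq_top.mp this

lemma vol_translate (A : Set E2) (p : E2) : volume ((fun x => x + p) '' A) = volume A := by
  have : (fun x : E2 => x + p) '' A = p +ᵥ A := by
    rw [← Set.image_vadd]
    exact Set.image_congr fun x _ => add_comm x p
  rw [this, measure_vadd]

lemma hull_le {l : E2 →ₗ[ℝ] ℝ} {S : Set E2} {c : ℝ} (h : ∀ x ∈ S, c ≤ l x) :
    ∀ x ∈ convexHull ℝ S, c ≤ l x :=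
  fun _x hx => convexHull_min h (convex_halfSpace_ge l.isLinear c) hx

lemma meas_union_ge {X V : Set E2} (hV : MeasurableSet V) (h0 : volume (X ∩ V) = 0) :
    volume X + volume V ≤ volume (X ∪ V) := by
  have h1 : volume X ≤ volume (X \ V) := by
    calc volume X ≤ volume (X \ V ∪ X ∩ V) := measure_mono (by
          intro x hx; by_cases hxV : x ∈ V
          · exact Or.inr ⟨hx, hxV⟩
          · exact Or.inl ⟨hx, hxV⟩)
      _ ≤ volume (X \ V) + volume (X ∩ V) := measure_union_le _ _
      _ = volume (X \ V) := by rw [h0, add_zero]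
  calc volume X + volume V ≤ volume (X \ V) + volume V := by gcongr
    _ = volume (X \ V ∪ V) := (measure_union Set.disjoint_sdiff_left hV).symm
    _ = volume (X ∪ V) := by rw [Set.diff_union_self]

lemma vol_pos_of_span_top {A : Set E2} (hA : Convex ℝ A) (h : affineSpan ℝ A = ⊤) :
    0 < volume A := by
  obtain ⟨x, hx⟩ := hA.interior_nonempty_iff_affineSpan_eq_top.mpr h
  calc (0 : ℝ≥0∞) < volume (interior A) := isOpen_interior.measure_pos volume ⟨x, hx⟩
    _ ≤ volume A := measure_mono interior_subset

lemma vol_diff_pos {A : Set E2} (hA : Convex ℝ A) (hc : IsCompact A)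
    (hint : (interior A).Nonempty) {v : E2} (hv : v ≠ 0) :
    0 < volume (((fun x => x + v) '' A) \ A) := by
  obtain ⟨x₀, hx₀⟩ := hint
  have hAne : A.Nonempty := ⟨x₀, interior_subset hx₀⟩
  set l := dotL v with hl
  have hlv : 0 < l v := dotL_self_pos hv
  have hcont : Continuous fun x : E2 => l x := l.continuous_of_finiteDimensional
  obtain ⟨a, haA, ha⟩ := hc.exists_isMaxOn hAne hcont.continuousOn
  set M := l a with hM
  have hMx : l x₀ ≤ M := ha (interior_subset hx₀)
  set s : ℝ := l v / (M - l x₀ + l v) with hsdef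
  have hden : 0 < M - l x₀ + l v := by linarith
  have hs0 : 0 < s := div_pos hlv hden
  have hs1 : s ≤ 1 := by rw [hsdef, div_le_one hden]; linarith
  have hslt : s * (M - l x₀) < l v := by
    rw [hsdef, div_mul_eq_mul_div, div_lt_iff₀ hden]
    nlinarith
  set y := s • x₀ + (1 - s) • a with hy
  have hyi : y ∈ interior A :=
    hA.combo_interior_self_mem_interior hx₀ haA hs0 (by linarith) (by ring)
  have hly : M - l v < l y := by
    have : l y = s * l x₀ + (1 - s) * M := by
      rw [hy]; simp [map_add, _root_.map_smul, smul_eq_mul, hM]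
    rw [this]; nlinarith
  set U := interior A ∩ {w : E2 | M - l v < l w} with hU
  have hUopen : IsOpen U := isOpen_interior.inter (isOpen_lt continuous_const hcont)
  have hUne : U.Nonempty := ⟨y, hyi, hly⟩
  have hUpos : 0 < volume U := hUopen.measure_pos volume hUne
  have hsub : (fun x => x + v) '' U ⊆ ((fun x => x + v) '' A) \ A := by
    rintro _ ⟨u, ⟨huA, hul⟩, rfl⟩
    refine ⟨⟨u, interior_subset huA, rfl⟩, fun hmem => ?_⟩
    have h1 : l (u + v) ≤ M := ha hmem
    have h2 : M - l v < l u := hul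
    rw [map_add] at h1
    linarith
  calc (0 : ℝ≥0∞) < volume U := hUpos
    _ = volume ((fun x => x + v) '' U) := (vol_translate U v).symm
    _ ≤ volume (((fun x => x + v) '' A) \ A) := measure_mono hsub

lemma main_ineq {A B : Set E2} (hAconv : Convex ℝ A) (hAc : IsCompact A)
    (hAint : (interior A).Nonempty) (hBc : IsCompact B)
    {l : E2 →ₗ[ℝ] ℝ} {p q : E2} (hl : l ≠ 0) (hpB : p ∈ B) (hqB : q ∈ B) (hpq : p ≠ q)
    (hlpq : l p = l q) (hmin : ∀ x ∈ B, l p ≤ l x) :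
    volume A + volume B < volume (A + B) := by
  have hAne : A.Nonempty := hAint.mono interior_subset
  have hcont : Continuous fun x : E2 => l x := l.continuous_of_finiteDimensional
  obtain ⟨a₀, ha₀A, ha₀⟩ := hAc.exists_isMaxOn hAne hcont.continuousOn
  set M := l a₀ with hM
  set U₁ := (fun x => x + p) '' A with hU₁
  set U₂ := (fun x => x + q) '' A with hU₂
  set V := (fun x => x + a₀) '' B with hV
  have hU₁c : IsCompact U₁ := hAc.image (continuous_id.add continuous_const)
  have hU₂c : IsCompact U₂ := hAc.image (continuous_id.add continuous_const)
  have hVc : IsCompact V := hBc.image (continuous_id.add continuous_const)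
  -- all are subsets of A + B
  have hsub : (U₁ ∪ U₂) ∪ V ⊆ A + B := by
    rintro x ((⟨u, hu, rfl⟩ | ⟨u, hu, rfl⟩) | ⟨b, hb, rfl⟩)
    · exact Set.add_mem_add hu hpB
    · exact Set.add_mem_add hu hqB
    · have h := Set.add_mem_add ha₀A hb
      simpa [add_comm] using h
  -- volume of U₁ ∪ U₂
  have hdiff : U₂ \ U₁ = (fun x => x + p) '' (((fun x => x + (q - p)) '' A) \ A) := by
    ext x
    constructor
    · rintro ⟨⟨u, hu, rfl⟩, hn⟩
      refine ⟨u + (q - p), ⟨⟨u, hu, rfl⟩, fun hmem => hn ⟨u + (q - p), hmem, by ring⟩⟩, by ring⟩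
    · rintro ⟨y, ⟨⟨u, hu, rfl⟩, hyn⟩, rfl⟩
      refine ⟨⟨u, hu, by ring⟩, ?_⟩
      rintro ⟨w, hw, hwx⟩
      have hw' : w = u + (q - p) := add_right_cancel hwx
      rw [hw'] at hw
      exact hyn hw
  have hdpos : 0 < volume (U₂ \ U₁) := by
    rw [hdiff, vol_translate]
    exact vol_diff_pos hAconv hAc hAint (sub_ne_zero.mpr (Ne.symm hpq))
  have hUU : volume (U₁ ∪ U₂) = volume U₁ + volume (U₂ \ U₁) := by
    rw [← Set.union_diff_self]
    exact measure_union Set.disjoint_sdiff_right (hU₂c.measurableSet.diff hU₁c.measurableSet)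
  -- the intersection with V is null
  have hXV : volume ((U₁ ∪ U₂) ∩ V) = 0 := by
    refine measure_mono_null (fun x hx => ?_) (levelSet_null hl (M + l p))
    obtain ⟨hxX, b, hb, hxb⟩ := hx
    have h1 : l x = l b + M := by rw [← hxb]; simp [map_add, hM]
    have h2 : l p ≤ l b := hmin b hb
    have h3 : l x ≤ M + l p := by
      rcases hxX with ⟨u, hu, rfl⟩ | ⟨u, hu, rfl⟩
      · simp only [map_add]
        have hmax : l u ≤ M := ha₀ hu
        linarith
      · simp only [map_add]
        have hmax : l u ≤ M := ha₀ hu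
        rw [← hlpq]
        linarith
    show l x = M + l p
    linarith
  have hfinal : volume (U₁ ∪ U₂) + volume V ≤ volume (A + B) :=
    le_trans (meas_union_ge hVc.measurableSet hXV) (measure_mono hsub)
  have hU₁v : volume U₁ = volume A := vol_translate A p
  have hVv : volume V = volume B := vol_translate B a₀
  have hne : volume A + volume B ≠ ⊤ :=
    (ENNReal.add_lt_top.mpr ⟨hAc.measure_lt_top, hBc.measure_lt_top⟩).ne
  calc volume A + volume B
      < volume A + volume B + volume (U₂ \ U₁) := ENNReal.lt_add_right hne hdpos.ne'
    _ = (volume U₁ + volume (U₂ \ U₁)) + volume V := by rw [hU₁v, hVv]; ring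
    _ = volume (U₁ ∪ U₂) + volume V := by rw [hUU]
    _ ≤ volume (A + B) := hfinal

def IsSeg' (A : Set E2) (a b : E2) : Prop := a ≠ b ∧ A = segment ℝ a b

lemma hull_R {T : Set ℝ} (hT : T.Finite) (hne : T.Nonempty) :
    ∃ m M, m ∈ T ∧ M ∈ T ∧ m ≤ M ∧ convexHull ℝ T = segment ℝ m M := by
  classical
  have hFne : hT.toFinset.Nonempty := by simpa using hne
  set m := hT.toFinset.min' hFne with hm
  set M := hT.toFinset.max' hFne with hM
  have hmT : m ∈ T := by have := hT.toFinset.min'_mem hFne; simpa using this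
  have hMT : M ∈ T := by have := hT.toFinset.max'_mem hFne; simpa using this
  have hmM : m ≤ M := hT.toFinset.min'_le M (by simpa using hMT)
  refine ⟨m, M, hmT, hMT, hmM, ?_⟩
  apply Set.Subset.antisymm
  · refine convexHull_min (fun t ht => ?_) ?_
    · rw [segment_eq_Icc hmM]
      exact ⟨hT.toFinset.min'_le t (by simpa using ht), hT.toFinset.le_max' t (by simpa using ht)⟩
    · rw [segment_eq_Icc hmM]; exact convex_Icc m M
  · exact (convex_convexHull ℝ T).segment_subset
      (subset_convexHull ℝ T hmT) (subset_convexHull ℝ T hMT)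

lemma seg_of_collinear {S : Set E2} (hS : S.Finite) (h2 : S.Nontrivial) (hc : Collinear ℝ S) :
    ∃ a b, IsSeg' (convexHull ℝ S) a b := by
  obtain ⟨x₀, hx₀⟩ := h2.nonempty
  obtain ⟨v, hv⟩ := (collinear_iff_of_mem hx₀).mp hc
  have hvne : v ≠ 0 := by
    rintro rfl
    obtain ⟨x, hx, y, hy, hxy⟩ := h2
    obtain ⟨r, hr⟩ := hv x hx
    obtain ⟨r', hr'⟩ := hv y hy
    apply hxy
    rw [hr, hr']; simp
  set f : ℝ →ᵃ[ℝ] E2 := AffineMap.lineMap x₀ (x₀ + v) with hf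
  have hfapp : ∀ t : ℝ, f t = t • v + x₀ := by
    intro t
    simp [hf, AffineMap.lineMap_apply, vadd_eq_add, vsub_eq_sub, add_sub_cancel_left]
  have hfinj : Function.Injective f :=
    AffineMap.lineMap_injective ℝ (fun h => hvne (left_eq_add.mp h))
  set T : Set ℝ := f ⁻¹' S with hTdef
  have hTfin : T.Finite := hS.preimage hfinj.injOn
  have hST : S = f '' T := by
    apply Set.Subset.antisymm
    · intro p hp
      obtain ⟨r, hr⟩ := hv p hp
      have hfr : f r = p := by rw [hfapp, hr]; rfl
      exact ⟨r, by simp only [hTdef, Set.mem_preimage, hfr]; exact hp, hfr⟩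
    · rintro _ ⟨t, ht, rfl⟩; exact ht
  have hTne : T.Nonempty := by
    have hmem : x₀ ∈ f '' T := hST ▸ hx₀
    obtain ⟨t, ht, -⟩ := hmem
    exact ⟨t, ht⟩
  obtain ⟨m, M, hmT, hMT, hmM, hhull⟩ := hull_R hTfin hTne
  have hmMne : m ≠ M := by
    rintro rfl
    have hsub : T ⊆ {m} := by
      intro t ht
      have : t ∈ convexHull ℝ T := subset_convexHull ℝ T ht
      rw [hhull, segment_same] at this
      exact this
    have : S.Subsingleton := by
      rw [hST]
      exact (Set.subsingleton_singleton.anti hsub).image f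
    exact h2.not_subsingleton this
  refine ⟨f m, f M, fun h => hmMne (hfinj h), ?_⟩
  rw [hST, ← AffineMap.image_convexHull, hhull, image_segment]

lemma trichotomy {S : Set E2} (hS : S.Finite) (hne : S.Nonempty) :
    (∃ p, convexHull ℝ S = {p}) ∨
    (S.Nontrivial ∧ ∃ a b, IsSeg' (convexHull ℝ S) a b) ∨
    (S.Nontrivial ∧ affineSpan ℝ S = ⊤) := by
  by_cases hsub : S.Subsingleton
  · obtain ⟨p, hp⟩ := hne
    rw [hsub.eq_singleton_of_mem hp]
    exact Or.inl ⟨p, convexHull_singleton p⟩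
  have h2 : S.Nontrivial := Set.not_subsingleton_iff.mp hsub
  by_cases hc : Collinear ℝ S
  · exact Or.inr (Or.inl ⟨h2, seg_of_collinear hS h2 hc⟩)
  · refine Or.inr (Or.inr ⟨h2, ?_⟩)
    by_contra htop
    apply hc
    rw [collinear_iff_finrank_le_one]
    have hvs : vectorSpan ℝ S ≠ ⊤ := by
      intro hv
      apply htop
      have hd : (affineSpan ℝ S).direction = ⊤ := by
        rw [direction_affineSpan]; exact hv
      exact (AffineSubspace.direction_eq_top_iff_of_nonempty
        ((affineSpan_nonempty ℝ).mpr hne)).mp hd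
    have hlt : Module.finrank ℝ (vectorSpan ℝ S) < Module.finrank ℝ E2 :=
      Submodule.finrank_lt hvs
    have : Module.finrank ℝ E2 = 2 := by simp [Module.finrank_pi]
    omega

lemma collinear_of_const0 {S : Set E2} {c : ℝ} (h : ∀ x ∈ S, x 0 = c) : Collinear ℝ S := by
  rcases S.eq_empty_or_nonempty with rfl | ⟨p, hp⟩
  · exact collinear_empty ℝ _
  · rw [collinear_iff_of_mem hp]
    refine ⟨(fun i => if i = 1 then 1 else 0 : E2), fun x hx => ⟨x 1 - p 1, ?_⟩⟩
    funext i
    fin_cases i <;> simp [vadd_eq_add, h x hx, h p hp]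

lemma exists_edge {S : Set E2} (hS : S.Finite) (h2 : S.Nontrivial) :
    ∃ (l : E2 →ₗ[ℝ] ℝ) (p q : E2), l ≠ 0 ∧ p ∈ convexHull ℝ S ∧ q ∈ convexHull ℝ S ∧ p ≠ q ∧
      l p = l q ∧ ∀ x ∈ convexHull ℝ S, l p ≤ l x := by
  classical
  by_cases hc : Collinear ℝ S
  · obtain ⟨a, b, hab, hseg⟩ := seg_of_collinear hS h2 hc
    have hba : b - a ≠ 0 := sub_ne_zero.mpr (Ne.symm hab)
    have hconst : ∀ x ∈ convexHull ℝ S, crossL (b - a) x = crossL (b - a) a := by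
      intro x hx
      rw [hseg] at hx
      obtain ⟨α, β, hα, hβ, hαβ, rfl⟩ := hx
      have : crossL (b - a) b = crossL (b - a) a := by
        have h0 : crossL (b - a) (b - a) = 0 := crossL_self _
        rw [map_sub] at h0; linarith
      simp only [map_add, _root_.map_smul, smul_eq_mul, this]
      linear_combination (crossL (b - a)) a * hαβ
    refine ⟨crossL (b - a), a, b, crossL_ne_zero hba, ?_, ?_, hab, ?_, ?_⟩
    · rw [hseg]; exact left_mem_segment ℝ a b
    · rw [hseg]; exact right_mem_segment ℝ a b
    · have h0 : crossL (b - a) (b - a) = 0 := crossL_self _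
      rw [map_sub] at h0; linarith
    · intro x hx; rw [hconst x hx]
  · -- non-collinear case : lexicographic minimum and minimal slope
    have hSne : S.Nonempty := h2.nonempty
    have hFne : hS.toFinset.Nonempty := by simpa using hSne
    obtain ⟨c0, hc0mem, hc0min⟩ := (hS.toFinset.image (fun x => x 0)).exists_min_image id
      (hFne.image _)
    simp only [id] at hc0min
    set F0 := hS.toFinset.filter (fun x => x 0 = c0) with hF0
    have hF0ne : F0.Nonempty := by
      obtain ⟨x, hx, hx0⟩ := Finset.mem_image.mp hc0mem
      exact ⟨x, Finset.mem_filter.mpr ⟨hx, hx0⟩⟩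
    obtain ⟨p, hpF0, hpmin⟩ := F0.exists_min_image (fun x => x 1) hF0ne
    have hpS : p ∈ S := by
      have := (Finset.mem_filter.mp hpF0).1; simpa using this
    have hp0 : p 0 = c0 := (Finset.mem_filter.mp hpF0).2
    have hge : ∀ x ∈ S, c0 ≤ x 0 := by
      intro x hx
      exact hc0min _ (Finset.mem_image.mpr ⟨x, by simpa using hx, rfl⟩)
    have hp1min : ∀ x ∈ S, x 0 = c0 → p 1 ≤ x 1 := by
      intro x hx hx0
      exact hpmin x (Finset.mem_filter.mpr ⟨by simpa using hx, hx0⟩)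
    set P := hS.toFinset.filter (fun x => p 0 < x 0) with hP
    have hPne : P.Nonempty := by
      by_contra hPe
      apply hc
      apply collinear_of_const0 (c := c0)
      intro x hx
      rcases eq_or_lt_of_le (hge x hx) with h | h
      · exact h.symm
      · exact absurd (Finset.mem_filter.mpr ⟨by simpa using hx, hp0 ▸ h⟩)
          (fun hmem => hPe ⟨x, hmem⟩)
    obtain ⟨q, hqP, hqmin⟩ := P.exists_min_image
      (fun x => (x 1 - p 1) / (x 0 - p 0)) hPne
    have hqS : q ∈ S := by have := (Finset.mem_filter.mp hqP).1; simpa using this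
    have hq0 : p 0 < q 0 := (Finset.mem_filter.mp hqP).2
    set v := q - p with hv
    have hv0 : 0 < v 0 := by simp [hv]; linarith
    have hkey : ∀ x ∈ S, crossL v p ≤ crossL v x := by
      intro x hx
      have hdiff : crossL v x - crossL v p = v 0 * (x 1 - p 1) - v 1 * (x 0 - p 0) := by
        rw [← map_sub, crossL_apply]
        simp [Pi.sub_apply]
      rcases eq_or_lt_of_le (hge x hx) with h | h
      · have h0 : x 0 = p 0 := by rw [hp0]; exact h.symm
        have h1 : p 1 ≤ x 1 := hp1min x hx h.symm
        have e : v 1 * (x 0 - p 0) = 0 := by rw [h0]; ring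
        have hm : 0 ≤ v 0 * (x 1 - p 1) := mul_nonneg hv0.le (sub_nonneg.mpr h1)
        linarith [hdiff]
      · have hx0 : p 0 < x 0 := by rw [hp0]; exact h
        have hxP : x ∈ P := Finset.mem_filter.mpr ⟨by simpa using hx, hx0⟩
        have hslope := hqmin x hxP
        have h1 : (q 1 - p 1) * (x 0 - p 0) ≤ (x 1 - p 1) * (q 0 - p 0) := by
          rw [div_le_div_iff₀ (by linarith) (by linarith)] at hslope
          linarith
        have hv1 : v 1 = q 1 - p 1 := by simp [hv]
        have hv0' : v 0 = q 0 - p 0 := by simp [hv]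
        have h2 : v 1 * (x 0 - p 0) ≤ v 0 * (x 1 - p 1) := by rw [hv1, hv0']; linarith
        linarith [hdiff]
    refine ⟨crossL v, p, q, crossL_ne_zero (by
        intro h0
        have := congrFun h0 0
        simp [hv] at this
        linarith), subset_convexHull ℝ S hpS, subset_convexHull ℝ S hqS,
      (fun h => by rw [h] at hq0; exact lt_irrefl _ hq0), ?_, ?_⟩
    · have h0 : crossL v v = 0 := crossL_self _
      rw [hv, map_sub] at h0
      linarith
    · exact hull_le hkey

lemma seg_null (a b : E2) : volume (segment ℝ a b) = 0 := by
  by_cases hab : a = b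
  · subst hab
    rw [segment_same]
    refine measure_mono_null (fun x hx => ?_) (levelSet_null (l := LinearMap.proj 0) ?_ (a 0))
    · rw [hx]; rfl
    · intro h
      have := congrFun (congrArg DFunLike.coe h) (fun i => if i = 0 then 1 else 0)
      simpa using this
  · have hba : b - a ≠ 0 := sub_ne_zero.mpr (Ne.symm hab)
    refine measure_mono_null (fun x hx => ?_) (levelSet_null (crossL_ne_zero hba) (crossL (b - a) a))
    obtain ⟨α, β, hα, hβ, hαβ, rfl⟩ := hx
    have heq : crossL (b - a) b = crossL (b - a) a := by
      have h0 : crossL (b - a) (b - a) = 0 := crossL_self _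
      rw [map_sub] at h0; linarith
    show crossL (b - a) (α • a + β • b) = crossL (b - a) a
    simp only [map_add, _root_.map_smul, smul_eq_mul, heq]
    linear_combination (crossL (b - a)) a * hαβ

lemma sum_seg_null {a b c d : E2} (hcd : c ≠ d) {r : ℝ} (hr : b - a = r • (d - c)) :
    volume (segment ℝ a b + segment ℝ c d) = 0 := by
  have hdc : d - c ≠ 0 := sub_ne_zero.mpr (Ne.symm hcd)
  set l := crossL (d - c) with hl
  have hld : l d = l c := by
    have h0 : l (d - c) = 0 := crossL_self _
    rw [map_sub] at h0; linarith
  have hlb : l b = l a := by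
    have : l (b - a) = 0 := by
      rw [hr, _root_.map_smul, smul_eq_mul]
      rw [show l (d - c) = 0 from crossL_self _]
      ring
    rw [map_sub] at this; linarith
  refine measure_mono_null (fun x hx => ?_) (levelSet_null (crossL_ne_zero hdc) (l a + l c))
  obtain ⟨y, hy, z, hz, rfl⟩ := hx
  obtain ⟨α, β, hα, hβ, hαβ, rfl⟩ := hy
  obtain ⟨γ, δ, hγ, hδ, hγδ, rfl⟩ := hz
  show l (α • a + β • b + (γ • c + δ • d)) = l a + l c
  simp only [map_add, _root_.map_smul, smul_eq_mul, hld, hlb]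
  linear_combination l a * hαβ + l c * hγδ

lemma span_top_of_indep {W : Set E2} (hne : W.Nonempty) {x y : E2} (hx : x ∈ vectorSpan ℝ W)
    (hy : y ∈ vectorSpan ℝ W) (hind : LinearIndependent ℝ ![x, y]) :
    affineSpan ℝ W = ⊤ := by
  have hvs : vectorSpan ℝ W = ⊤ := by
    have hE : Module.finrank ℝ E2 = 2 := by simp [Module.finrank_pi]
    have hsp : Submodule.span ℝ {x, y} ≤ vectorSpan ℝ W := by
      rw [Submodule.span_le]
      rintro z (rfl | rfl)
      · exact hx
      · exact hy
    have hcard : Module.finrank ℝ (Submodule.span ℝ {x, y}) = 2 := by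
      have h1 : ({x, y} : Set E2) = Set.range ![x, y] := by
        simp [Matrix.range_cons, Matrix.range_empty, Set.insert_comm]
        ext z; simp [or_comm]
      rw [h1, finrank_span_eq_card hind]
      simp
    have htop : Submodule.span ℝ {x, y} = ⊤ :=
      Submodule.eq_top_of_finrank_eq (by rw [hcard, hE])
    exact top_le_iff.mp (htop ▸ hsp)
  have hd : (affineSpan ℝ W).direction = ⊤ := by
    rw [direction_affineSpan]; exact hvs
  exact (AffineSubspace.direction_eq_top_iff_of_nonempty
    ((affineSpan_nonempty ℝ).mpr hne)).mp hd

lemma vsub_mem_vectorSpan' {W : Set E2} {x y : E2} (hx : x ∈ W) (hy : y ∈ W) :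
    x - y ∈ vectorSpan ℝ W :=
  vsub_mem_vectorSpan ℝ hx hy

lemma nonpar_segs_pos {a b c d : E2} (hab : a ≠ b) (hcd : c ≠ d)
    (hnr : ¬∃ r : ℝ, b - a = r • (d - c)) :
    0 < volume (segment ℝ a b + segment ℝ c d) := by
  set u := b - a with hu
  set v := d - c with hv
  have hvne : v ≠ 0 := sub_ne_zero.mpr (Ne.symm hcd)
  have hind : LinearIndependent ℝ ![u, v] := by
    rw [LinearIndependent.pair_iff]
    intro s t hst
    by_cases hs : s = 0
    · subst hs
      simp only [zero_smul, zero_add] at hst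
      rcases smul_eq_zero.mp hst with ht | hv0
      · exact ⟨rfl, ht⟩
      · exact absurd hv0 hvne
    · exfalso
      apply hnr
      refine ⟨-t / s, ?_⟩
      have h1 : s • u = -(t • v) := eq_neg_of_add_eq_zero_left hst
      have h2 : u = s⁻¹ • (s • u) := by rw [smul_smul, inv_mul_cancel₀ hs, one_smul]
      rw [h2, h1, smul_neg, smul_smul, ← neg_smul]
      congr 1
      field_simp
  set W := segment ℝ a b + segment ℝ c d with hW
  have hWconv : Convex ℝ W := (convex_segment a b).add (convex_segment c d)
  have hWne : (a + c) ∈ W :=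
    Set.add_mem_add (left_mem_segment ℝ a b) (left_mem_segment ℝ c d)
  have hu' : u ∈ vectorSpan ℝ W := by
    have h1 : (b + c) ∈ W := Set.add_mem_add (right_mem_segment ℝ a b) (left_mem_segment ℝ c d)
    have := vsub_mem_vectorSpan' h1 hWne
    have he : (b + c) - (a + c) = u := by rw [hu]; ring
    rwa [he] at this
  have hv' : v ∈ vectorSpan ℝ W := by
    have h1 : (a + d) ∈ W := Set.add_mem_add (left_mem_segment ℝ a b) (right_mem_segment ℝ c d)
    have := vsub_mem_vectorSpan' h1 hWne
    have he : (a + d) - (a + c) = v := by rw [hv]; ring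
    rwa [he] at this
  exact vol_pos_of_span_top hWconv (span_top_of_indep ⟨_, hWne⟩ hu' hv' hind)

noncomputable def npSet (f : MvPolynomial (Fin 2) ℂ) : Set E2 :=
  (fun (α : Fin 2 →₀ ℕ) (i : Fin 2) => (α i : ℝ)) '' (f.support : Set (Fin 2 →₀ ℕ))

lemma np_eq (f : MvPolynomial (Fin 2) ℂ) : newtonPolytope f = convexHull ℝ (npSet f) := rfl

lemma npSet_finite (f : MvPolynomial (Fin 2) ℂ) : (npSet f).Finite :=
  f.support.finite_toSet.image _

lemma npSet_nonempty {f : MvPolynomial (Fin 2) ℂ} (hf : f ≠ 0) : (npSet f).Nonempty := by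
  apply Set.Nonempty.image
  simpa using hf

lemma IsSeg_of_IsSeg' {A : Set E2} {a b : E2} (h : IsSeg' A a b) : IsSeg A a b := h

lemma np_compact (f : MvPolynomial (Fin 2) ℂ) : IsCompact (newtonPolytope f) :=
  (npSet_finite f).isCompact_convexHull ℝ

lemma np_convex (f : MvPolynomial (Fin 2) ℂ) : Convex ℝ (newtonPolytope f) :=
  convex_convexHull ℝ _

lemma MV_comm (f g : MvPolynomial (Fin 2) ℂ) : MV f g = MV g f := by
  unfold MV
  rw [add_comm (newtonPolytope f)]
  ring

lemma MV_pos_main {f g : MvPolynomial (Fin 2) ℂ} (hftop : affineSpan ℝ (npSet f) = ⊤)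
    (hg2 : (npSet g).Nontrivial) : 0 < MV f g := by
  obtain ⟨l, p, q, hl, hpB, hqB, hpq, hlpq, hmin⟩ := exists_edge (npSet_finite g) hg2
  have hAconv : Convex ℝ (newtonPolytope f) := np_convex f
  have hAc : IsCompact (newtonPolytope f) := np_compact f
  have hAint : (interior (newtonPolytope f)).Nonempty :=
    hAconv.interior_nonempty_iff_affineSpan_eq_top.mpr
      (by rw [np_eq, affineSpan_convexHull]; exact hftop)
  have hBc : IsCompact (newtonPolytope g) := np_compact g
  have hmain := main_ineq hAconv hAc hAint hBc hl hpB hqB hpq hlpq hmin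
  have hABfin : volume (newtonPolytope f + newtonPolytope g) ≠ ⊤ :=
    (hAc.add hBc).measure_lt_top.ne
  have hAfin : volume (newtonPolytope f) ≠ ⊤ := hAc.measure_lt_top.ne
  have hBfin : volume (newtonPolytope g) ≠ ⊤ := hBc.measure_lt_top.ne
  have h1 : (volume (newtonPolytope f) + volume (newtonPolytope g)).toReal
      < (volume (newtonPolytope f + newtonPolytope g)).toReal :=
    (ENNReal.toReal_lt_toReal (ENNReal.add_ne_top.mpr ⟨hAfin, hBfin⟩) hABfin).mpr hmain
  rw [ENNReal.toReal_add hAfin hBfin] at h1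
  unfold MV vol2
  linarith

lemma MV_pos_segs {f g : MvPolynomial (Fin 2) ℂ} {a b c d : E2}
    (hA : newtonPolytope f = segment ℝ a b) (hB : newtonPolytope g = segment ℝ c d)
    (hab : a ≠ b) (hcd : c ≠ d) (hnr : ¬∃ r : ℝ, b - a = r • (d - c)) : 0 < MV f g := by
  have hfin : volume (newtonPolytope f + newtonPolytope g) ≠ ⊤ :=
    ((np_compact f).add (np_compact g)).measure_lt_top.ne
  rw [hA, hB] at hfin
  have hpos := nonpar_segs_pos hab hcd hnr
  unfold MV vol2
  rw [hA, hB, seg_null a b, seg_null c d]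
  have := ENNReal.toReal_pos hpos.ne' hfin
  simpa using this

lemma MV_zero_left {f g : MvPolynomial (Fin 2) ℂ} {p : E2}
    (hf : newtonPolytope f = {p}) : MV f g = 0 := by
  unfold MV vol2
  rw [hf]
  have h1 : ({p} : Set E2) + newtonPolytope g = (fun x => x + p) '' newtonPolytope g := by
    rw [Set.singleton_add]
    exact Set.image_congr fun x _ => add_comm p x
  have h2 : volume ({p} : Set E2) = 0 := by
    have := seg_null p p
    rwa [segment_same] at this
  rw [h1, vol_translate, h2]
  simp

lemma MV_zero_right {f g : MvPolynomial (Fin 2) ℂ} {p : E2}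
    (hg : newtonPolytope g = {p}) : MV f g = 0 := by
  rw [MV_comm]
  exact MV_zero_left hg

lemma MV_zero_segs {f g : MvPolynomial (Fin 2) ℂ} {a b c d : E2}
    (hA : newtonPolytope f = segment ℝ a b) (hB : newtonPolytope g = segment ℝ c d)
    (hcd : c ≠ d) {r : ℝ} (hr : b - a = r • (d - c)) : MV f g = 0 := by
  unfold MV vol2
  rw [hA, hB, seg_null a b, seg_null c d, sum_seg_null hcd hr]
  simp

theorem stmt_0 (f₁ f₂ : MvPolynomial (Fin 2) ℂ) (h₁ : f₁ ≠ 0) (h₂ : f₂ ≠ 0) :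
    MV f₁ f₂ = 0 ↔
      ((∃ a b c d, IsSeg (newtonPolytope f₁) a b ∧ IsSeg (newtonPolytope f₂) c d ∧
          ∃ r : ℝ, b - a = r • (d - c)) ∨
        (∃ p, newtonPolytope f₁ = {p}) ∨ (∃ p, newtonPolytope f₂ = {p})) := by
  constructor
  · intro hMV
    rcases trichotomy (npSet_finite f₁) (npSet_nonempty h₁) with
      ⟨p, hp⟩ | ⟨h2A, a, b, hsegA⟩ | ⟨h2A, htopA⟩
    · exact Or.inr (Or.inl ⟨p, hp⟩)
    · rcases trichotomy (npSet_finite f₂) (npSet_nonempty h₂) with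
        ⟨p, hp⟩ | ⟨h2B, c, d, hsegB⟩ | ⟨h2B, htopB⟩
      · exact Or.inr (Or.inr ⟨p, hp⟩)
      · by_cases hr : ∃ r : ℝ, b - a = r • (d - c)
        · exact Or.inl ⟨a, b, c, d, hsegA, hsegB, hr⟩
        · exact absurd hMV (ne_of_gt (MV_pos_segs hsegA.2 hsegB.2 hsegA.1 hsegB.1 hr))
      · exfalso
        have hpos : 0 < MV f₂ f₁ := MV_pos_main htopB h2A
        rw [MV_comm] at hMV
        linarith
    · rcases trichotomy (npSet_finite f₂) (npSet_nonempty h₂) with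
        ⟨p, hp⟩ | ⟨h2B, c, d, hsegB⟩ | ⟨h2B, htopB⟩
      · exact Or.inr (Or.inr ⟨p, hp⟩)
      · exact absurd hMV (ne_of_gt (MV_pos_main htopA h2B))
      · exact absurd hMV (ne_of_gt (MV_pos_main htopA h2B))
  · rintro (⟨a, b, c, d, ⟨hab, hA⟩, ⟨hcd, hB⟩, r, hr⟩ | ⟨p, hp⟩ | ⟨p, hp⟩)
    · exact MV_zero_segs hA hB hcd hr
    · exact MV_zero_left hp
    · exact MV_zero_right hp
end

section
/- Let R be a unique factorization domain, let F, G be nonzero formal power series in R[[X₁,…,Xₙ]] with n ≥ 3, and let v ∈ ℕⁿ be a weight vector with positive coordinates. Assume that the v-initial parts F_v and G_v have no common divisor in R[[X₁,…,Xₙ]] other than monomials, and that the ideal generated by F_v and G_v contains no monomial. Then the ideal generated by F and G in R[[X₁,…,Xₙ]] contains no element H whose v-initial part H_v is a monomial. -/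
/-- The `v`-weighted degree of an exponent `α`. -/
noncomputable def wdeg {n : ℕ} (v : Fin n → ℕ) (α : Fin n →₀ ℕ) : ℕ := ∑ i, v i * α i

/-- The `v`-order of a power series: the minimal `v`-weighted degree on its support. -/
noncomputable def vord {n : ℕ} {R : Type*} [CommRing R] (v : Fin n → ℕ)
    (F : MvPowerSeries (Fin n) R) : ℕ :=
  sInf {w | ∃ α, MvPowerSeries.coeff α F ≠ 0 ∧ wdeg v α = w}

/-- The `v`-initial part of a power series: the sum of its terms of least `v`-weighted degree. -/
noncomputable def initPart {n : ℕ} {R : Type*} [CommRing R] (v : Fin n → ℕ)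
    (F : MvPowerSeries (Fin n) R) : MvPowerSeries (Fin n) R :=
  fun α => if wdeg v α = vord v F then MvPowerSeries.coeff α F else 0

/-- A (nonzero) monomial `c·X^α`. -/
def IsMon {n : ℕ} {R : Type*} [CommRing R] (F : MvPowerSeries (Fin n) R) : Prop :=
  ∃ (α : Fin n →₀ ℕ) (c : R), c ≠ 0 ∧ F = MvPowerSeries.monomial α c

set_option linter.unusedSectionVars false

section StmtAuxSection
open MvPowerSeries

namespace StmtAux

open MvPowerSeries

variable {n : ℕ} {R : Type*} [CommRing R]

theorem wdeg_add (v : Fin n → ℕ) (α β : Fin n →₀ ℕ) :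
    wdeg v (α + β) = wdeg v α + wdeg v β := by
  simp [wdeg, Finsupp.add_apply, mul_add, Finset.sum_add_distrib]

theorem coeff_initPart (v : Fin n → ℕ) (F : MvPowerSeries (Fin n) R) (α : Fin n →₀ ℕ) :
    MvPowerSeries.coeff α (initPart v F) =
      if wdeg v α = vord v F then MvPowerSeries.coeff α F else 0 := rfl

/-- `v`-homogeneity of degree `d`. -/
def Hog (v : Fin n → ℕ) (d : ℕ) (P : MvPowerSeries (Fin n) R) : Prop :=
  ∀ α, MvPowerSeries.coeff α P ≠ 0 → wdeg v α = d

theorem exists_coeff_ne_zero {F : MvPowerSeries (Fin n) R} (hF : F ≠ 0) :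
    ∃ α, MvPowerSeries.coeff α F ≠ 0 := by
  by_contra h
  push_neg at h
  exact hF (MvPowerSeries.ext fun α => by simpa using h α)

theorem vord_spec (v : Fin n → ℕ) {F : MvPowerSeries (Fin n) R} (hF : F ≠ 0) :
    ∃ α, MvPowerSeries.coeff α F ≠ 0 ∧ wdeg v α = vord v F := by
  obtain ⟨α, hα⟩ := exists_coeff_ne_zero hF
  exact Nat.sInf_mem (s := {w | ∃ α, MvPowerSeries.coeff α F ≠ 0 ∧ wdeg v α = w})
    ⟨wdeg v α, α, hα, rfl⟩

theorem vord_le_wdeg (v : Fin n → ℕ) {F : MvPowerSeries (Fin n) R} {α : Fin n →₀ ℕ}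
    (h : MvPowerSeries.coeff α F ≠ 0) : vord v F ≤ wdeg v α :=
  Nat.sInf_le ⟨α, h, rfl⟩

theorem coeff_eq_zero_of_lt (v : Fin n → ℕ) {F : MvPowerSeries (Fin n) R} {α : Fin n →₀ ℕ}
    (h : wdeg v α < vord v F) : MvPowerSeries.coeff α F = 0 := by
  by_contra hc
  exact absurd (vord_le_wdeg v hc) (by omega)

theorem hog_initPart (v : Fin n → ℕ) (F : MvPowerSeries (Fin n) R) :
    Hog v (vord v F) (initPart v F) := by
  intro α hα
  rw [coeff_initPart] at hα
  by_contra h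
  simp [h] at hα

theorem initPart_ne_zero (v : Fin n → ℕ) {F : MvPowerSeries (Fin n) R} (hF : F ≠ 0) :
    initPart v F ≠ 0 := by
  obtain ⟨α, hα, hw⟩ := vord_spec v hF
  intro h
  have : MvPowerSeries.coeff α (initPart v F) = 0 := by rw [h]; simp
  rw [coeff_initPart, if_pos hw] at this
  exact hα this

theorem vord_of_hog (v : Fin n → ℕ) {d : ℕ} {P : MvPowerSeries (Fin n) R} (hP : P ≠ 0)
    (h : Hog v d P) : vord v P = d := by
  obtain ⟨α, hα, hw⟩ := vord_spec v hP
  rw [← hw, h α hα]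

theorem initPart_of_hog (v : Fin n → ℕ) {d : ℕ} {P : MvPowerSeries (Fin n) R}
    (h : Hog v d P) : initPart v P = P := by
  ext α
  rw [coeff_initPart]
  split
  · rfl
  · rename_i hne
    by_contra hc
    have := h α (fun h0 => hc h0.symm)
    rw [this] at hne
    by_cases hP : P = 0
    · exact hc (by rw [hP]; simp)
    · exact hne (vord_of_hog v hP h).symm

theorem vord_initPart (v : Fin n → ℕ) {F : MvPowerSeries (Fin n) R} (hF : F ≠ 0) :
    vord v (initPart v F) = vord v F :=
  vord_of_hog v (initPart_ne_zero v hF) (hog_initPart v F)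

theorem initPart_initPart (v : Fin n → ℕ) (F : MvPowerSeries (Fin n) R) :
    initPart v (initPart v F) = initPart v F :=
  initPart_of_hog v (hog_initPart v F)

end StmtAux

section Chunk2

namespace StmtAux
variable {n : ℕ} {R : Type*} [CommRing R]

theorem coeff_mul_eq_zero_of_lt (v : Fin n → ℕ) {F G : MvPowerSeries (Fin n) R}
    {α : Fin n →₀ ℕ} (h : wdeg v α < vord v F + vord v G) :
    MvPowerSeries.coeff α (F * G) = 0 := by
  classical
  rw [MvPowerSeries.coeff_mul]
  apply Finset.sum_eq_zero
  intro p hp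
  have hsum : p.1 + p.2 = α := Finset.HasAntidiagonal.mem_antidiagonal.mp hp
  have hw : wdeg v p.1 + wdeg v p.2 = wdeg v α := by rw [← wdeg_add, hsum]
  by_cases h1 : MvPowerSeries.coeff p.1 F = 0
  · rw [h1, zero_mul]
  · have e1 := vord_le_wdeg v h1
    have h2 : MvPowerSeries.coeff p.2 G = 0 :=
      coeff_eq_zero_of_lt v (by omega)
    rw [h2, mul_zero]

theorem coeff_mul_of_eq (v : Fin n → ℕ) {F G : MvPowerSeries (Fin n) R}
    {α : Fin n →₀ ℕ} (h : wdeg v α = vord v F + vord v G) :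
    MvPowerSeries.coeff α (F * G) =
      MvPowerSeries.coeff α (initPart v F * initPart v G) := by
  classical
  rw [MvPowerSeries.coeff_mul, MvPowerSeries.coeff_mul]
  apply Finset.sum_congr rfl
  intro p hp
  have hsum : p.1 + p.2 = α := Finset.HasAntidiagonal.mem_antidiagonal.mp hp
  have hw : wdeg v p.1 + wdeg v p.2 = wdeg v α := by rw [← wdeg_add, hsum]
  by_cases h1 : MvPowerSeries.coeff p.1 F = 0
  · rw [h1, coeff_initPart]
    simp [h1]
  by_cases h2 : MvPowerSeries.coeff p.2 G = 0
  · rw [h2, coeff_initPart v G]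
    simp [h2]
  have e1 := vord_le_wdeg v h1
  have e2 := vord_le_wdeg v h2
  have hq1 : wdeg v p.1 = vord v F := by omega
  have hq2 : wdeg v p.2 = vord v G := by omega
  rw [coeff_initPart, coeff_initPart, if_pos hq1, if_pos hq2]

variable [IsDomain R]

theorem hog_mul (v : Fin n → ℕ) {d e : ℕ} {P Q : MvPowerSeries (Fin n) R}
    (hP : Hog v d P) (hQ : Hog v e Q) : Hog v (d + e) (P * Q) := by
  classical
  intro α hα
  rw [MvPowerSeries.coeff_mul] at hα
  obtain ⟨p, hp, hne⟩ := Finset.exists_ne_zero_of_sum_ne_zero hα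
  have hsum : p.1 + p.2 = α := Finset.HasAntidiagonal.mem_antidiagonal.mp hp
  have h1 : MvPowerSeries.coeff p.1 P ≠ 0 := fun h => hne (by rw [h, zero_mul])
  have h2 : MvPowerSeries.coeff p.2 Q ≠ 0 := fun h => hne (by rw [h, mul_zero])
  rw [← hsum, wdeg_add, hP p.1 h1, hQ p.2 h2]

theorem vord_mul (v : Fin n → ℕ) {F G : MvPowerSeries (Fin n) R} (hF : F ≠ 0) (hG : G ≠ 0) :
    vord v (F * G) = vord v F + vord v G := by
  have hPQ : initPart v F * initPart v G ≠ 0 :=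
    mul_ne_zero (initPart_ne_zero v hF) (initPart_ne_zero v hG)
  have hhog : Hog v (vord v F + vord v G) (initPart v F * initPart v G) :=
    hog_mul v (hog_initPart v F) (hog_initPart v G)
  obtain ⟨β, hβ, hwβ⟩ := vord_spec v hPQ
  have hwd : wdeg v β = vord v F + vord v G := hhog β hβ
  have hcoeff : MvPowerSeries.coeff β (F * G) ≠ 0 := by
    rw [coeff_mul_of_eq v hwd]; exact hβ
  apply le_antisymm
  · rw [← hwd]; exact vord_le_wdeg v hcoeff
  · have hFG : F * G ≠ 0 := fun h => hcoeff (by rw [h]; simp)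
    obtain ⟨γ, hγ, hwγ⟩ := vord_spec v hFG
    by_contra hlt
    exact hγ (coeff_mul_eq_zero_of_lt v (by omega))

theorem initPart_mul (v : Fin n → ℕ) {F G : MvPowerSeries (Fin n) R} (hF : F ≠ 0) (hG : G ≠ 0) :
    initPart v (F * G) = initPart v F * initPart v G := by
  have hhog : Hog v (vord v F + vord v G) (initPart v F * initPart v G) :=
    hog_mul v (hog_initPart v F) (hog_initPart v G)
  ext α
  rw [coeff_initPart, vord_mul v hF hG]
  split
  · rename_i hα
    exact coeff_mul_of_eq v hα
  · rename_i hα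
    by_contra hc
    exact hα (hhog α fun h => hc h.symm)

end StmtAux
end Chunk2

section Chunk3
namespace StmtAux
variable {n : ℕ} {R : Type*} [CommRing R]

/-- The component of `v`-weighted degree `d`. -/
noncomputable def comp (v : Fin n → ℕ) (d : ℕ) (F : MvPowerSeries (Fin n) R) :
    MvPowerSeries (Fin n) R :=
  fun α => if wdeg v α = d then MvPowerSeries.coeff α F else 0

theorem coeff_comp (v : Fin n → ℕ) (d : ℕ) (F : MvPowerSeries (Fin n) R) (α : Fin n →₀ ℕ) :
    MvPowerSeries.coeff α (comp v d F) =
      if wdeg v α = d then MvPowerSeries.coeff α F else 0 := rfl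

theorem comp_add (v : Fin n → ℕ) (d : ℕ) (F G : MvPowerSeries (Fin n) R) :
    comp v d (F + G) = comp v d F + comp v d G := by
  ext α
  rw [map_add, coeff_comp, coeff_comp, coeff_comp, map_add]
  split <;> simp

theorem comp_vord (v : Fin n → ℕ) (F : MvPowerSeries (Fin n) R) :
    comp v (vord v F) F = initPart v F := rfl

theorem comp_eq_zero_of_lt (v : Fin n → ℕ) {d : ℕ} {F : MvPowerSeries (Fin n) R}
    (h : d < vord v F) : comp v d F = 0 := by
  ext α
  rw [coeff_comp]
  split
  · rename_i hα
    exact coeff_eq_zero_of_lt v (by omega)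
  · simp

theorem monomial_ne_zero {α : Fin n →₀ ℕ} {c : R} (hc : c ≠ 0) :
    (MvPowerSeries.monomial α c) ≠ 0 := fun h => by
  have := MvPowerSeries.coeff_monomial_same (R := R) α c
  rw [h] at this
  simp at this
  exact hc this.symm

theorem hog_monomial (v : Fin n → ℕ) (α : Fin n →₀ ℕ) (c : R) :
    Hog v (wdeg v α) (MvPowerSeries.monomial α c) := by
  classical
  intro β hβ
  rw [MvPowerSeries.coeff_monomial] at hβ
  by_cases h : β = α
  · rw [h]
  · simp [h] at hβ

theorem isMon_ne_zero {P : MvPowerSeries (Fin n) R} (h : IsMon P) : P ≠ 0 := by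
  obtain ⟨α, c, hc, rfl⟩ := h
  exact monomial_ne_zero hc

theorem initPart_zero (v : Fin n → ℕ) : initPart v (0 : MvPowerSeries (Fin n) R) = 0 := by
  ext α
  rw [coeff_initPart]
  split <;> simp

theorem ne_zero_of_isMon_initPart (v : Fin n → ℕ) {H : MvPowerSeries (Fin n) R}
    (h : IsMon (initPart v H)) : H ≠ 0 := by
  rintro rfl
  exact isMon_ne_zero h (initPart_zero v)

theorem isMon_mul_monomial [IsDomain R] (v : Fin n → ℕ) {P : MvPowerSeries (Fin n) R}
    (hP : IsMon P) (α : Fin n →₀ ℕ) {c : R} (hc : c ≠ 0) :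
    IsMon (MvPowerSeries.monomial α c * P) := by
  obtain ⟨β, b, hb, rfl⟩ := hP
  exact ⟨α + β, c * b, mul_ne_zero hc hb, MvPowerSeries.monomial_mul_monomial α β c b⟩

end StmtAux
end Chunk3

section Chunk4
namespace StmtAux
variable {n : ℕ} {R : Type*} [CommRing R]

theorem finite_wdeg_eq (v : Fin n → ℕ) (hv : ∀ i, 0 < v i) (d : ℕ) :
    {α : Fin n →₀ ℕ | wdeg v α = d}.Finite := by
  have hbound : ∀ α ∈ {α : Fin n →₀ ℕ | wdeg v α = d}, ∀ i, α i < d + 1 := by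
    intro α hα i
    have h1 : v i * α i ≤ wdeg v α :=
      Finset.single_le_sum (f := fun i => v i * α i) (fun j _ => Nat.zero_le _)
        (Finset.mem_univ i)
    have h2 : α i ≤ v i * α i := Nat.le_mul_of_pos_left _ (hv i)
    have := hα
    simp only [Set.mem_setOf_eq] at this
    omega
  apply Set.Finite.subset
    (Set.finite_range (fun f : Fin n → Fin (d + 1) =>
      Finsupp.equivFunOnFinite.symm (fun i => (f i : ℕ))))
  intro α hα
  refine ⟨fun i => ⟨α i, hbound α hα i⟩, ?_⟩
  apply Finsupp.ext
  intro i
  simp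

theorem exists_poly (v : Fin n → ℕ) (hv : ∀ i, 0 < v i) {d : ℕ}
    {P : MvPowerSeries (Fin n) R} (hP : Hog v d P) :
    ∃ Q : MvPolynomial (Fin n) R, (Q : MvPowerSeries (Fin n) R) = P := by
  classical
  obtain ⟨s, hs⟩ := (finite_wdeg_eq v hv d).exists_finset_coe
  refine ⟨∑ α ∈ s, MvPolynomial.monomial α (MvPowerSeries.coeff α P), ?_⟩
  ext β
  push_cast [MvPolynomial.coeff_coe]
  rw [MvPolynomial.coeff_sum]
  simp only [MvPolynomial.coeff_monomial]
  rw [Finset.sum_ite_eq' s β (fun α => MvPowerSeries.coeff α P)]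
  split
  · rfl
  · rename_i hβ
    by_contra hc
    apply hβ
    rw [← Finset.mem_coe, hs]
    exact hP β fun h => hc h.symm

end StmtAux
end Chunk4

section Chunk5
namespace StmtAux
variable {n : ℕ} {R : Type*} [CommRing R] [IsDomain R] [UniqueFactorizationMonoid R]

/-- The UFD gcd-extraction step: from `PA · F_v = -(PB · G_v)` with coprimality of the
initial parts up to monomials, extract a monomial `m` and `A1` with `m · PA = G_v · A1`. -/
theorem exists_mon_step (v : Fin n → ℕ) (hv : ∀ i, 0 < v i)
    {F G : MvPowerSeries (Fin n) R} (hF : F ≠ 0) (hG : G ≠ 0)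
    (hdiv : ∀ D : MvPowerSeries (Fin n) R,
      D ∣ initPart v F → D ∣ initPart v G → IsUnit D ∨ IsMon D)
    {PA PB : MvPowerSeries (Fin n) R} (hPA : PA ≠ 0)
    {a b : ℕ} (hogA : Hog v a PA) (hogB : Hog v b PB)
    (heq : PA * initPart v F = -(PB * initPart v G)) :
    ∃ m A1 : MvPowerSeries (Fin n) R,
      IsMon m ∧ A1 ≠ 0 ∧ m * PA = initPart v G * A1 := by
  classical
  obtain ⟨qA, hqA⟩ := exists_poly v hv hogA
  obtain ⟨qB, hqB⟩ := exists_poly v hv hogB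
  obtain ⟨qF, hqF⟩ := exists_poly v hv (hog_initPart v F)
  obtain ⟨qG, hqG⟩ := exists_poly v hv (hog_initPart v G)
  have hqA0 : qA ≠ 0 := fun h => hPA (by rw [← hqA, h]; simp)
  have hqG0 : qG ≠ 0 := fun h => initPart_ne_zero v hG (by rw [← hqG, h]; simp)
  -- transfer the equation to the polynomial ring
  have coe_neg : ∀ x : MvPolynomial (Fin n) R,
      ((-x : MvPolynomial (Fin n) R) : MvPowerSeries (Fin n) R) = -(x : MvPowerSeries (Fin n) R) := by
    intro x
    ext β
    rw [map_neg]
    simp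
  have hpoly : qA * qF = -(qB * qG) := by
    apply MvPolynomial.coe_injective (σ := Fin n) (R := R)
    show ((qA * qF : MvPolynomial (Fin n) R) : MvPowerSeries (Fin n) R) = ↑(-(qB * qG))
    rw [MvPolynomial.coe_mul, coe_neg, MvPolynomial.coe_mul, hqA, hqB, hqF, hqG]
    exact heq
  obtain ⟨a', g', c', hrel, hca, hcg⟩ :=
    UniqueFactorizationMonoid.exists_reduced_factors qA hqA0 qG
  have hc'0 : c' ≠ 0 := fun h => hqA0 (by rw [← hca, h, zero_mul])
  have ha'0 : a' ≠ 0 := fun h => hqA0 (by rw [← hca, h, mul_zero])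
  -- cancel c'
  have hred : a' * qF = -(qB * g') := by
    apply mul_left_cancel₀ hc'0
    rw [← mul_assoc, hca, hpoly, ← hcg]
    ring
  have hdvd : g' ∣ a' * qF := ⟨-qB, by rw [hred]; ring⟩
  have hg'F : g' ∣ qF := (hrel.symm).dvd_of_dvd_mul_left hdvd
  have hg'G : g' ∣ qG := ⟨c', by rw [← hcg]; ring⟩
  have hDF : (g' : MvPowerSeries (Fin n) R) ∣ initPart v F := by
    rw [← hqF]
    exact_mod_cast MvPolynomial.coeToMvPowerSeries.ringHom.map_dvd hg'F
  have hDG : (g' : MvPowerSeries (Fin n) R) ∣ initPart v G := by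
    rw [← hqG]
    exact_mod_cast MvPolynomial.coeToMvPowerSeries.ringHom.map_dvd hg'G
  have hkey : (qG : MvPowerSeries (Fin n) R) = (c' : MvPowerSeries (Fin n) R) * g' := by
    rw [← MvPolynomial.coe_mul, hcg]
  have hkeyA : (PA : MvPowerSeries (Fin n) R) = (c' : MvPowerSeries (Fin n) R) * a' := by
    rw [← MvPolynomial.coe_mul, hca, hqA]
  have ha'PS : (a' : MvPowerSeries (Fin n) R) ≠ 0 := by
    intro h
    apply ha'0
    apply MvPolynomial.coe_injective (σ := Fin n) (R := R)
    show ((a' : MvPolynomial (Fin n) R) : MvPowerSeries (Fin n) R)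
      = ((0 : MvPolynomial (Fin n) R) : MvPowerSeries (Fin n) R)
    rw [MvPolynomial.coe_zero, h]
  rcases hdiv _ hDF hDG with hunit | hmon
  · obtain ⟨u, hu⟩ := hunit
    refine ⟨1, (↑u⁻¹ : MvPowerSeries (Fin n) R) * a', ⟨0, 1, one_ne_zero,
      (MvPowerSeries.monomial_zero_one).symm⟩, mul_ne_zero (Units.ne_zero u⁻¹) ha'PS, ?_⟩
    rw [one_mul, hkeyA, ← hqG, hkey]
    rw [← hu]
    calc (c' : MvPowerSeries (Fin n) R) * a'
        = (c' : MvPowerSeries (Fin n) R) * (↑u * ↑u⁻¹) * a' := by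
          rw [Units.mul_inv, mul_one]
      _ = ↑c' * ↑u * (↑u⁻¹ * ↑a') := by ring
  · refine ⟨g', a', hmon, ha'PS, ?_⟩
    rw [hkeyA, ← hqG, hkey]
    ring

end StmtAux
end Chunk5

section Chunk6
namespace StmtAux
variable {n : ℕ} {R : Type*} [CommRing R]

theorem lt_vord (v : Fin n → ℕ) {X : MvPowerSeries (Fin n) R} (hX : X ≠ 0) {t : ℕ}
    (h : ∀ β, wdeg v β ≤ t → MvPowerSeries.coeff β X = 0) : t < vord v X := by
  obtain ⟨α, hα, hw⟩ := vord_spec v hX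
  by_contra hc
  exact hα (h α (by omega))

theorem coeff_eq_coeff_initPart (v : Fin n → ℕ) {X : MvPowerSeries (Fin n) R}
    {β : Fin n →₀ ℕ} (h : wdeg v β = vord v X) :
    MvPowerSeries.coeff β X = MvPowerSeries.coeff β (initPart v X) := by
  rw [coeff_initPart, if_pos h]

theorem min_vord_le (v : Fin n → ℕ) {X Y H : MvPowerSeries (Fin n) R} (hH : H ≠ 0)
    (hsum : X + Y = H) : min (vord v X) (vord v Y) ≤ vord v H := by
  obtain ⟨α, hα, hw⟩ := vord_spec v hH
  rw [← hsum, map_add] at hα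
  rw [← hw]
  by_cases h1 : MvPowerSeries.coeff α X = 0
  · have h2 : MvPowerSeries.coeff α Y ≠ 0 := fun h => hα (by rw [h1, h, add_zero])
    exact le_trans (min_le_right _ _) (vord_le_wdeg v h2)
  · exact le_trans (min_le_left _ _) (vord_le_wdeg v h1)

variable [IsDomain R]

/-- If `H = B' * G` with everything nonzero, then `initPart v H` lies in the span,
contradicting `hmon`. -/
theorem single_case (v : Fin n → ℕ) {F G : MvPowerSeries (Fin n) R} (hF : F ≠ 0) (hG : G ≠ 0)
    (hmon : ∀ H ∈ Ideal.span {initPart v F, initPart v G}, ¬ IsMon H)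
    {W H : MvPowerSeries (Fin n) R} (hW : W ≠ 0)
    (h : H = W * F ∨ H = W * G) (hm : IsMon (initPart v H)) : False := by
  rcases h with rfl | rfl
  · exact hmon _ (Ideal.mem_span_pair.mpr ⟨initPart v W, 0, by
      rw [initPart_mul v hW hF]; ring⟩) hm
  · exact hmon _ (Ideal.mem_span_pair.mpr ⟨0, initPart v W, by
      rw [initPart_mul v hW hG]; ring⟩) hm

/-- The contradiction when `vord H` equals the minimum order. -/
theorem hit (v : Fin n → ℕ) {F G : MvPowerSeries (Fin n) R} (hF : F ≠ 0) (hG : G ≠ 0)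
    (hmon : ∀ H ∈ Ideal.span {initPart v F, initPart v G}, ¬ IsMon H)
    {A B H : MvPowerSeries (Fin n) R} (hA : A ≠ 0) (hB : B ≠ 0) (hH : H ≠ 0)
    (hABH : A * F + B * G = H) (hm : IsMon (initPart v H))
    (hd : vord v H = min (vord v (A * F)) (vord v (B * G))) : False := by
  set d := min (vord v (A * F)) (vord v (B * G)) with hdef
  have hAF : A * F ≠ 0 := mul_ne_zero hA hF
  have hBG : B * G ≠ 0 := mul_ne_zero hB hG
  have h1 : comp v d (A * F) ∈ Ideal.span {initPart v F, initPart v G} := by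
    rcases eq_or_lt_of_le (min_le_left (vord v (A * F)) (vord v (B * G))) with he | hl
    · have : comp v d (A * F) = initPart v (A * F) := by rw [hdef, he, comp_vord]
      rw [this, initPart_mul v hA hF]
      exact Ideal.mem_span_pair.mpr ⟨initPart v A, 0, by ring⟩
    · rw [comp_eq_zero_of_lt v hl]
      exact Ideal.zero_mem _
  have h2 : comp v d (B * G) ∈ Ideal.span {initPart v F, initPart v G} := by
    rcases eq_or_lt_of_le (min_le_right (vord v (A * F)) (vord v (B * G))) with he | hl
    · have : comp v d (B * G) = initPart v (B * G) := by rw [hdef, he, comp_vord]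
      rw [this, initPart_mul v hB hG]
      exact Ideal.mem_span_pair.mpr ⟨0, initPart v B, by ring⟩
    · rw [comp_eq_zero_of_lt v hl]
      exact Ideal.zero_mem _
  have h3 : initPart v H = comp v d (A * F) + comp v d (B * G) := by
    rw [← comp_add, hABH, ← hd, comp_vord]
  exact hmon _ (h3 ▸ Ideal.add_mem _ h1 h2) hm

end StmtAux
end Chunk6


section Chunk7
namespace StmtAux
variable {n : ℕ} {R : Type*} [CommRing R] [IsDomain R] [UniqueFactorizationMonoid R]

theorem key (v : Fin n → ℕ) (hv : ∀ i, 0 < v i)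
    {F G : MvPowerSeries (Fin n) R} (hF : F ≠ 0) (hG : G ≠ 0)
    (hdiv : ∀ D : MvPowerSeries (Fin n) R,
      D ∣ initPart v F → D ∣ initPart v G → IsUnit D ∨ IsMon D)
    (hmon : ∀ H ∈ Ideal.span {initPart v F, initPart v G}, ¬ IsMon H) :
    ∀ δ : ℕ, ∀ A B H : MvPowerSeries (Fin n) R, A ≠ 0 → B ≠ 0 → H ≠ 0 →
      A * F + B * G = H → IsMon (initPart v H) →
      vord v H ≤ min (vord v (A * F)) (vord v (B * G)) + δ → False := by
  intro δ
  induction δ with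
  | zero =>
    intro A B H hA hB hH hABH hm hle
    have := min_vord_le v hH hABH
    exact hit v hF hG hmon hA hB hH hABH hm (by omega)
  | succ δ ih =>
    intro A B H hA hB hH hABH hm hle
    have hminle := min_vord_le v hH hABH
    by_cases heqd : vord v H = min (vord v (A * F)) (vord v (B * G))
    · exact hit v hF hG hmon hA hB hH hABH hm heqd
    have hlt : min (vord v (A * F)) (vord v (B * G)) < vord v H := by omega
    have hAF : A * F ≠ 0 := mul_ne_zero hA hF
    have hBG : B * G ≠ 0 := mul_ne_zero hB hG
    have h0 : comp v (min (vord v (A * F)) (vord v (B * G))) (A * F)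
        + comp v (min (vord v (A * F)) (vord v (B * G))) (B * G) = 0 := by
      rw [← comp_add, hABH]
      exact comp_eq_zero_of_lt v hlt
    have hdd : vord v (A * F) = vord v (B * G) := by
      rcases lt_trichotomy (vord v (A * F)) (vord v (B * G)) with h | h | h
      · exfalso
        rw [min_eq_left h.le, comp_vord, comp_eq_zero_of_lt v (by omega), add_zero] at h0
        exact initPart_ne_zero v hAF h0
      · exact h
      · exfalso
        rw [min_eq_right h.le, comp_eq_zero_of_lt v (by omega), comp_vord, zero_add] at h0
        exact initPart_ne_zero v hBG h0
    rw [min_eq_left hdd.le] at h0 hlt hle heqd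
    rw [comp_vord, hdd, comp_vord] at h0
    rw [initPart_mul v hA hF, initPart_mul v hB hG] at h0
    have heq : initPart v A * initPart v F = -(initPart v B * initPart v G) :=
      eq_neg_of_add_eq_zero_left h0
    obtain ⟨m, A1, hmmon, hA10, hmA⟩ :=
      exists_mon_step v hv hF hG hdiv (initPart_ne_zero v hA)
        (hog_initPart v A) (hog_initPart v B) heq
    obtain ⟨γ, c, hc, hmeq⟩ := hmmon
    have hm0 : m ≠ 0 := by rw [hmeq]; exact monomial_ne_zero hc
    have hogm : Hog v (wdeg v γ) m := by rw [hmeq]; exact hog_monomial v γ c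
    set A1' := initPart v A1 with hA1'def
    have hA1'0 : A1' ≠ 0 := initPart_ne_zero v hA10
    have hmA' : m * initPart v A = initPart v G * A1' := by
      calc m * initPart v A
          = initPart v (m * initPart v A) :=
            (initPart_of_hog v (hog_mul v hogm (hog_initPart v A))).symm
        _ = initPart v (initPart v G * A1) := by rw [hmA]
        _ = initPart v G * A1' := by
            rw [initPart_mul v (initPart_ne_zero v hG) hA10, initPart_initPart]
    have hmB' : m * initPart v B = -(A1' * initPart v F) := by
      apply mul_left_cancel₀ (initPart_ne_zero v hG)
      have h5 : m * (initPart v A * initPart v F)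
          = -(m * initPart v B * initPart v G) := by rw [heq]; ring
      rw [← mul_assoc, hmA'] at h5
      linear_combination h5
    have hdeg : vord v m + vord v A = vord v G + vord v A1' := by
      have h6 := congrArg (vord v) hmA'
      rw [vord_mul v hm0 (initPart_ne_zero v hA),
        vord_mul v (initPart_ne_zero v hG) hA1'0,
        vord_initPart v hA, vord_initPart v hG] at h6
      exact h6
    have eAF : vord v (A * F) = vord v A + vord v F := vord_mul v hA hF
    have eBG : vord v (B * G) = vord v B + vord v G := vord_mul v hB hG
    set A' := m * A - A1' * G with hA'def
    set B' := m * B + A1' * F with hB'def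
    have hH'eq : A' * F + B' * G = m * H := by rw [← hABH]; ring
    have hH'0 : m * H ≠ 0 := mul_ne_zero hm0 hH
    have hmonH' : IsMon (initPart v (m * H)) := by
      have h7 : initPart v (m * H) = m * initPart v H := by
        rw [initPart_mul v hm0 hH, initPart_of_hog v hogm]
      rw [h7, hmeq]
      exact isMon_mul_monomial v hm γ hc
    by_cases hA'0 : A' = 0
    · have h8 : m * H = B' * G := by rw [← hH'eq, hA'0]; ring
      have hB'0 : B' ≠ 0 := fun h => hH'0 (by rw [h8, h, zero_mul])
      exact single_case v hF hG hmon hB'0 (Or.inr h8) hmonH'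
    by_cases hB'0 : B' = 0
    · have h8 : m * H = A' * F := by rw [← hH'eq, hB'0]; ring
      exact single_case v hF hG hmon hA'0 (Or.inl h8) hmonH'
    -- the two new products have strictly larger order
    have claimA : ∀ β, wdeg v β ≤ vord v (A * F) + vord v m →
        MvPowerSeries.coeff β (A' * F) = 0 := by
      intro β hβ
      have hexp : A' * F = m * (A * F) - A1' * (G * F) := by rw [hA'def]; ring
      rw [hexp, map_sub]
      have e1 : vord v (m * (A * F)) = vord v m + vord v (A * F) := vord_mul v hm0 hAF
      have e2 : vord v (A1' * (G * F)) = vord v A1' + (vord v G + vord v F) := by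
        rw [vord_mul v hA1'0 (mul_ne_zero hG hF), vord_mul v hG hF]
      by_cases hβlt : wdeg v β < vord v (A * F) + vord v m
      · rw [coeff_eq_zero_of_lt v (by rw [e1]; omega),
          coeff_eq_zero_of_lt v (by rw [e2]; omega), sub_zero]
      · have c1' : MvPowerSeries.coeff β (m * (A * F))
            = MvPowerSeries.coeff β (initPart v (m * (A * F))) :=
          coeff_eq_coeff_initPart v (by rw [e1]; omega)
        have c2' : MvPowerSeries.coeff β (A1' * (G * F))
            = MvPowerSeries.coeff β (initPart v (A1' * (G * F))) :=
          coeff_eq_coeff_initPart v (by rw [e2]; omega)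
        rw [c1', c2', initPart_mul v hm0 hAF, initPart_mul v hA1'0 (mul_ne_zero hG hF),
          initPart_mul v hA hF, initPart_mul v hG hF, initPart_of_hog v hogm,
          hA1'def, initPart_initPart, ← map_sub]
        have h9 : m * (initPart v A * initPart v F)
            - initPart v A1 * (initPart v G * initPart v F) = 0 := by
          linear_combination (initPart v F) * hmA'
        rw [h9, map_zero]
    have claimB : ∀ β, wdeg v β ≤ vord v (A * F) + vord v m →
        MvPowerSeries.coeff β (B' * G) = 0 := by
      intro β hβ
      have hexp : B' * G = m * (B * G) + A1' * (F * G) := by rw [hB'def]; ring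
      rw [hexp, map_add]
      have e1 : vord v (m * (B * G)) = vord v m + vord v (B * G) := vord_mul v hm0 hBG
      have e2 : vord v (A1' * (F * G)) = vord v A1' + (vord v F + vord v G) := by
        rw [vord_mul v hA1'0 (mul_ne_zero hF hG), vord_mul v hF hG]
      by_cases hβlt : wdeg v β < vord v (A * F) + vord v m
      · rw [coeff_eq_zero_of_lt v (by rw [e1]; omega),
          coeff_eq_zero_of_lt v (by rw [e2]; omega), add_zero]
      · have c1' : MvPowerSeries.coeff β (m * (B * G))
            = MvPowerSeries.coeff β (initPart v (m * (B * G))) :=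
          coeff_eq_coeff_initPart v (by rw [e1]; omega)
        have c2' : MvPowerSeries.coeff β (A1' * (F * G))
            = MvPowerSeries.coeff β (initPart v (A1' * (F * G))) :=
          coeff_eq_coeff_initPart v (by rw [e2]; omega)
        rw [c1', c2', initPart_mul v hm0 hBG, initPart_mul v hA1'0 (mul_ne_zero hF hG),
          initPart_mul v hB hG, initPart_mul v hF hG, initPart_of_hog v hogm,
          hA1'def, initPart_initPart, ← map_add]
        have h9 : m * (initPart v B * initPart v G)
            + initPart v A1 * (initPart v F * initPart v G) = 0 := by
          linear_combination (initPart v G) * hmB'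
        rw [h9, map_zero]
    have cA : vord v (A * F) + vord v m < vord v (A' * F) :=
      lt_vord v (mul_ne_zero hA'0 hF) claimA
    have cB : vord v (A * F) + vord v m < vord v (B' * G) :=
      lt_vord v (mul_ne_zero hB'0 hG) claimB
    have hvH' : vord v (m * H) = vord v m + vord v H := vord_mul v hm0 hH
    exact ih A' B' (m * H) hA'0 hB'0 hH'0 hH'eq hmonH' (by omega)

end StmtAux
end Chunk7


end StmtAuxSection

theorem stmt_2 (R : Type*) [CommRing R] [IsDomain R] [UniqueFactorizationMonoid R]
    (n : ℕ) (hn : 3 ≤ n) (F G : MvPowerSeries (Fin n) R) (hF : F ≠ 0) (hG : G ≠ 0)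
    (v : Fin n → ℕ) (hv : ∀ i, 0 < v i)
    (hdiv : ∀ D : MvPowerSeries (Fin n) R,
      D ∣ initPart v F → D ∣ initPart v G → IsUnit D ∨ IsMon D)
    (hmon : ∀ H ∈ Ideal.span {initPart v F, initPart v G}, ¬ IsMon H) :
    ∀ H ∈ Ideal.span {F, G}, ¬ IsMon (initPart v H) := by
  intro H hH hm
  have hH0 : H ≠ 0 := StmtAux.ne_zero_of_isMon_initPart v hm
  obtain ⟨A, B, hABH⟩ := Ideal.mem_span_pair.mp hH
  by_cases hA : A = 0
  · have h8 : H = B * G := by rw [← hABH, hA]; ring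
    have hB : B ≠ 0 := fun h => hH0 (by rw [h8, h, zero_mul])
    exact StmtAux.single_case v hF hG hmon hB (Or.inr h8) hm
  by_cases hB : B = 0
  · have h8 : H = A * F := by rw [← hABH, hB]; ring
    exact StmtAux.single_case v hF hG hmon hA (Or.inl h8) hm
  exact StmtAux.key v hv hF hG hdiv hmon (vord v H) A B H hA hB hH0 hABH hm (by omega)
end

section
/- Let R be a UFD, let F, G ∈ R[[X₁,…,Xₙ]] be nonzero series whose v-initial parts F_v, G_v (for a fixed positive weight vector v) are coprime, have equal v-order ξ, and generate an ideal containing no monomial. Suppose A·F + B·G = ω + (higher order terms in v-grading) for some nonzero A, B ∈ R[[X₁,…,Xₙ]] and a monomial ω of v-degree t. Then the v-orders of A and B are both at least ξ, and 2ξ < t. -/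
/-! ### Auxiliary definitions -/

/-- The set of `v`-weighted degrees occurring in the support of `H`. -/
def wset {n : ℕ} {R : Type*} [CommRing R] (v : Fin n → ℕ) (H : MvPowerSeries (Fin n) R) :
    Set ℕ := {w | ∃ α, MvPowerSeries.coeff α H ≠ 0 ∧ wdeg v α = w}

/-- The maximal `v`-weighted degree on the support (junk if unbounded). -/
noncomputable def vtop {n : ℕ} {R : Type*} [CommRing R] (v : Fin n → ℕ)
    (H : MvPowerSeries (Fin n) R) : ℕ := sSup (wset v H)

/-- The top part of a power series with respect to the `v`-weighted grading. -/
noncomputable def topPart {n : ℕ} {R : Type*} [CommRing R] (v : Fin n → ℕ)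
    (H : MvPowerSeries (Fin n) R) : MvPowerSeries (Fin n) R :=
  fun α => if wdeg v α = vtop v H then MvPowerSeries.coeff α H else 0

/-- A polynomial representative of a power series supported in a single stratum. -/
noncomputable def polyOf {n : ℕ} {R : Type*} [CommRing R] (v : Fin n → ℕ) (d : ℕ)
    (H : MvPowerSeries (Fin n) R) : MvPolynomial (Fin n) R :=
  ∑ β ∈ Finset.Iic (Finsupp.equivFunOnFinite.symm fun _ => d),
    MvPolynomial.monomial β (MvPowerSeries.coeff β H)

section Aux
variable {n : ℕ} {R : Type*} [CommRing R]

lemma wdeg_add (v : Fin n → ℕ) (α β : Fin n →₀ ℕ) :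
    wdeg v (α + β) = wdeg v α + wdeg v β := by
  simp [wdeg, Finsupp.add_apply, mul_add, Finset.sum_add_distrib]

lemma wdeg_zero (v : Fin n → ℕ) : wdeg v (0 : Fin n →₀ ℕ) = 0 := by simp [wdeg]

lemma eq_zero_of_wdeg_eq_zero {v : Fin n → ℕ} (hv : ∀ i, 0 < v i) {γ : Fin n →₀ ℕ}
    (h : wdeg v γ = 0) : γ = 0 := by
  have h' : ∀ i ∈ Finset.univ, v i * γ i = 0 := Finset.sum_eq_zero_iff.mp h
  ext i
  have hi := h' i (Finset.mem_univ i)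
  have hvi := hv i
  simp only [Finsupp.coe_zero, Pi.zero_apply]
  rcases Nat.mul_eq_zero.mp hi with h | h
  · omega
  · exact h

lemma coeff_initPart (v : Fin n → ℕ) (H : MvPowerSeries (Fin n) R) (α : Fin n →₀ ℕ) :
    MvPowerSeries.coeff α (initPart v H)
      = if wdeg v α = vord v H then MvPowerSeries.coeff α H else 0 := rfl

lemma coeff_topPart (v : Fin n → ℕ) (H : MvPowerSeries (Fin n) R) (α : Fin n →₀ ℕ) :
    MvPowerSeries.coeff α (topPart v H)
      = if wdeg v α = vtop v H then MvPowerSeries.coeff α H else 0 := rfl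

lemma exists_coeff_ne_zero {H : MvPowerSeries (Fin n) R} (h : H ≠ 0) :
    ∃ α, MvPowerSeries.coeff α H ≠ 0 := by
  by_contra h'; push_neg at h'
  exact h (MvPowerSeries.ext fun α => by simpa using h' α)

lemma vord_le {v : Fin n → ℕ} {H : MvPowerSeries (Fin n) R} {α : Fin n →₀ ℕ}
    (h : MvPowerSeries.coeff α H ≠ 0) : vord v H ≤ wdeg v α :=
  Nat.sInf_le ⟨α, h, rfl⟩

lemma coeff_eq_zero_of_lt {v : Fin n → ℕ} {H : MvPowerSeries (Fin n) R} {α : Fin n →₀ ℕ}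
    (h : wdeg v α < vord v H) : MvPowerSeries.coeff α H = 0 := by
  by_contra h0; exact absurd (vord_le h0) (not_le.2 h)

lemma exists_vord {v : Fin n → ℕ} {H : MvPowerSeries (Fin n) R} (h : H ≠ 0) :
    ∃ α, MvPowerSeries.coeff α H ≠ 0 ∧ wdeg v α = vord v H := by
  have hne : {w | ∃ α, MvPowerSeries.coeff α H ≠ 0 ∧ wdeg v α = w}.Nonempty := by
    obtain ⟨α, hα⟩ := exists_coeff_ne_zero h
    exact ⟨wdeg v α, α, hα, rfl⟩
  exact Nat.sInf_mem hne

lemma initPart_ne_zero {v : Fin n → ℕ} {H : MvPowerSeries (Fin n) R} (h : H ≠ 0) :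
    initPart v H ≠ 0 := by
  obtain ⟨α, hα, hw⟩ := exists_vord (v := v) h
  intro h0
  have := coeff_initPart v H α
  rw [h0, if_pos hw, map_zero] at this
  exact hα this.symm

lemma coeff_initPart_ne_zero {v : Fin n → ℕ} {H : MvPowerSeries (Fin n) R} {α : Fin n →₀ ℕ}
    (h : MvPowerSeries.coeff α (initPart v H) ≠ 0) :
    wdeg v α = vord v H := by
  rw [coeff_initPart] at h
  by_contra h'; rw [if_neg h'] at h; exact h rfl

lemma le_vtop {v : Fin n → ℕ} {H : MvPowerSeries (Fin n) R} (hb : BddAbove (wset v H))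
    {α : Fin n →₀ ℕ} (h : MvPowerSeries.coeff α H ≠ 0) : wdeg v α ≤ vtop v H :=
  le_csSup hb ⟨α, h, rfl⟩

lemma coeff_eq_zero_of_vtop_lt {v : Fin n → ℕ} {H : MvPowerSeries (Fin n) R}
    (hb : BddAbove (wset v H)) {α : Fin n →₀ ℕ}
    (h : vtop v H < wdeg v α) : MvPowerSeries.coeff α H = 0 := by
  by_contra h0; exact absurd (le_vtop hb h0) (not_le.2 h)

lemma exists_vtop {v : Fin n → ℕ} {H : MvPowerSeries (Fin n) R} (hb : BddAbove (wset v H))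
    (h : H ≠ 0) : ∃ α, MvPowerSeries.coeff α H ≠ 0 ∧ wdeg v α = vtop v H := by
  have hne : (wset v H).Nonempty := by
    obtain ⟨α, hα⟩ := exists_coeff_ne_zero h
    exact ⟨wdeg v α, α, hα, rfl⟩
  exact Nat.sSup_mem hne hb

lemma topPart_ne_zero {v : Fin n → ℕ} {H : MvPowerSeries (Fin n) R} (hb : BddAbove (wset v H))
    (h : H ≠ 0) : topPart v H ≠ 0 := by
  obtain ⟨α, hα, hw⟩ := exists_vtop hb h
  intro h0
  have := coeff_topPart v H α
  rw [h0, if_pos hw, map_zero] at this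
  exact hα this.symm

lemma vord_le_vtop {v : Fin n → ℕ} {H : MvPowerSeries (Fin n) R} (hb : BddAbove (wset v H))
    (h : H ≠ 0) : vord v H ≤ vtop v H := by
  obtain ⟨α, hα⟩ := exists_coeff_ne_zero h
  exact le_trans (vord_le hα) (le_vtop hb hα)

lemma coeff_mul_of_lt {v : Fin n → ℕ} {H K : MvPowerSeries (Fin n) R} {ε : Fin n →₀ ℕ}
    (hε : wdeg v ε < vord v H + vord v K) : MvPowerSeries.coeff ε (H * K) = 0 := by
  rw [MvPowerSeries.coeff_mul]
  apply Finset.sum_eq_zero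
  rintro ⟨γ, δ⟩ hmem
  have hγδ : γ + δ = ε := Finset.HasAntidiagonal.mem_antidiagonal.mp hmem
  have hlt : wdeg v γ + wdeg v δ < vord v H + vord v K := by
    rw [← wdeg_add, hγδ]; exact hε
  rcases lt_or_ge (wdeg v γ) (vord v H) with h | h
  · simp [coeff_eq_zero_of_lt h]
  · have : wdeg v δ < vord v K := by omega
    simp [coeff_eq_zero_of_lt this]

lemma coeff_mul_of_eq {v : Fin n → ℕ} {H K : MvPowerSeries (Fin n) R} {ε : Fin n →₀ ℕ}
    (hε : wdeg v ε = vord v H + vord v K) :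
    MvPowerSeries.coeff ε (H * K)
      = MvPowerSeries.coeff ε (initPart v H * initPart v K) := by
  rw [MvPowerSeries.coeff_mul, MvPowerSeries.coeff_mul]
  apply Finset.sum_congr rfl
  rintro ⟨γ, δ⟩ hmem
  have hγδ : γ + δ = ε := Finset.HasAntidiagonal.mem_antidiagonal.mp hmem
  have hsum : wdeg v γ + wdeg v δ = vord v H + vord v K := by
    rw [← wdeg_add, hγδ]; exact hε
  rw [coeff_initPart, coeff_initPart]
  by_cases h1 : wdeg v γ = vord v H
  · have h2 : wdeg v δ = vord v K := by omega
    rw [if_pos h1, if_pos h2]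
  · rcases lt_or_gt_of_ne h1 with h | h
    · simp [coeff_eq_zero_of_lt h, if_neg h1]
    · have h2 : wdeg v δ < vord v K := by omega
      simp [coeff_eq_zero_of_lt h2, if_neg h1]

lemma coeff_initPart_mul_ne_zero {v : Fin n → ℕ} {H K : MvPowerSeries (Fin n) R}
    {ε : Fin n →₀ ℕ} (h : MvPowerSeries.coeff ε (initPart v H * initPart v K) ≠ 0) :
    wdeg v ε = vord v H + vord v K := by
  rw [MvPowerSeries.coeff_mul] at h
  obtain ⟨⟨γ, δ⟩, hmem, hne⟩ := Finset.exists_ne_zero_of_sum_ne_zero h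
  have hγδ : γ + δ = ε := Finset.HasAntidiagonal.mem_antidiagonal.mp hmem
  have h1 : MvPowerSeries.coeff γ (initPart v H) ≠ 0 := left_ne_zero_of_mul hne
  have h2 : MvPowerSeries.coeff δ (initPart v K) ≠ 0 := right_ne_zero_of_mul hne
  have e1 : wdeg v γ = vord v H := coeff_initPart_ne_zero h1
  have e2 : wdeg v δ = vord v K := coeff_initPart_ne_zero h2
  rw [← hγδ, wdeg_add, e1, e2]

lemma coeff_mul_of_eq_vtop {v : Fin n → ℕ} {H K : MvPowerSeries (Fin n) R}
    (hbH : BddAbove (wset v H)) (hbK : BddAbove (wset v K)) {ε : Fin n →₀ ℕ}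
    (hε : wdeg v ε = vtop v H + vtop v K) :
    MvPowerSeries.coeff ε (H * K)
      = MvPowerSeries.coeff ε (topPart v H * topPart v K) := by
  rw [MvPowerSeries.coeff_mul, MvPowerSeries.coeff_mul]
  apply Finset.sum_congr rfl
  rintro ⟨γ, δ⟩ hmem
  have hγδ : γ + δ = ε := Finset.HasAntidiagonal.mem_antidiagonal.mp hmem
  have hsum : wdeg v γ + wdeg v δ = vtop v H + vtop v K := by
    rw [← wdeg_add, hγδ]; exact hε
  rw [coeff_topPart, coeff_topPart]
  by_cases h1 : wdeg v γ = vtop v H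
  · have h2 : wdeg v δ = vtop v K := by omega
    rw [if_pos h1, if_pos h2]
  · rcases lt_or_gt_of_ne h1 with h | h
    · have h2 : vtop v K < wdeg v δ := by omega
      simp [coeff_eq_zero_of_vtop_lt hbK h2, if_neg h1]
    · simp [coeff_eq_zero_of_vtop_lt hbH h, if_neg h1]

lemma coeff_topPart_mul_ne_zero {v : Fin n → ℕ} {H K : MvPowerSeries (Fin n) R}
    {ε : Fin n →₀ ℕ} (h : MvPowerSeries.coeff ε (topPart v H * topPart v K) ≠ 0) :
    wdeg v ε = vtop v H + vtop v K := by
  rw [MvPowerSeries.coeff_mul] at h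
  obtain ⟨⟨γ, δ⟩, hmem, hne⟩ := Finset.exists_ne_zero_of_sum_ne_zero h
  have hγδ : γ + δ = ε := Finset.HasAntidiagonal.mem_antidiagonal.mp hmem
  have h1 : MvPowerSeries.coeff γ (topPart v H) ≠ 0 := left_ne_zero_of_mul hne
  have h2 : MvPowerSeries.coeff δ (topPart v K) ≠ 0 := right_ne_zero_of_mul hne
  rw [coeff_topPart] at h1 h2
  have e1 : wdeg v γ = vtop v H := by by_contra h'; rw [if_neg h'] at h1; exact h1 rfl
  have e2 : wdeg v δ = vtop v K := by by_contra h'; rw [if_neg h'] at h2; exact h2 rfl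
  rw [← hγδ, wdeg_add, e1, e2]

variable [IsDomain R]

lemma vord_mul {v : Fin n → ℕ} {H K : MvPowerSeries (Fin n) R} (hH : H ≠ 0) (hK : K ≠ 0) :
    vord v (H * K) = vord v H + vord v K := by
  have hP : initPart v H * initPart v K ≠ 0 :=
    mul_ne_zero (initPart_ne_zero hH) (initPart_ne_zero hK)
  obtain ⟨ε, hε, _⟩ := exists_vord (v := v) hP
  have hw : wdeg v ε = vord v H + vord v K := coeff_initPart_mul_ne_zero hε
  have h1 : MvPowerSeries.coeff ε (H * K) ≠ 0 := by
    rw [coeff_mul_of_eq hw]; exact hε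
  have h2 : vord v (H * K) ≤ vord v H + vord v K := hw ▸ vord_le h1
  have h3 : vord v H + vord v K ≤ vord v (H * K) := by
    by_contra h'
    obtain ⟨δ, hδ, hδw⟩ := exists_vord (v := v) (mul_ne_zero hH hK)
    have hlt : wdeg v δ < vord v H + vord v K := by omega
    exact hδ (coeff_mul_of_lt hlt)
  omega

lemma initPart_mul {v : Fin n → ℕ} {H K : MvPowerSeries (Fin n) R} (hH : H ≠ 0) (hK : K ≠ 0) :
    initPart v (H * K) = initPart v H * initPart v K := by
  apply MvPowerSeries.ext; intro ε
  rw [coeff_initPart, vord_mul hH hK]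
  by_cases h : wdeg v ε = vord v H + vord v K
  · rw [if_pos h, coeff_mul_of_eq h]
  · rw [if_neg h]
    by_contra h'
    exact h (coeff_initPart_mul_ne_zero fun hh => h' hh.symm)

omit [IsDomain R] in
lemma vord_initPart {v : Fin n → ℕ} {H : MvPowerSeries (Fin n) R} (hH : H ≠ 0) :
    vord v (initPart v H) = vord v H := by
  obtain ⟨α, hα, hw⟩ := exists_vord (v := v) hH
  have h1 : MvPowerSeries.coeff α (initPart v H) ≠ 0 := by
    rw [coeff_initPart, if_pos hw]; exact hα
  have h2 := vord_le (v := v) h1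
  rw [hw] at h2
  obtain ⟨β, hβ, hβw⟩ := exists_vord (v := v) (initPart_ne_zero (v := v) hH)
  have := coeff_initPart_ne_zero hβ
  omega

omit [IsDomain R] in
/-- If `S` agrees with a stratum-supported nonzero `P` in its stratum and vanishes below,
then `P` is the initial part of `S`. -/
lemma initPart_eq_of {v : Fin n → ℕ} {d : ℕ} {S P : MvPowerSeries (Fin n) R} (hP : P ≠ 0)
    (hsupp : ∀ ε, MvPowerSeries.coeff ε P ≠ 0 → wdeg v ε = d)
    (hlow : ∀ ε, wdeg v ε < d → MvPowerSeries.coeff ε S = 0)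
    (heq : ∀ ε, wdeg v ε = d → MvPowerSeries.coeff ε S = MvPowerSeries.coeff ε P) :
    vord v S = d ∧ initPart v S = P := by
  obtain ⟨ε₀, hε₀⟩ := exists_coeff_ne_zero hP
  have hw₀ : wdeg v ε₀ = d := hsupp ε₀ hε₀
  have hS₀ : MvPowerSeries.coeff ε₀ S ≠ 0 := by rw [heq ε₀ hw₀]; exact hε₀
  have hS : S ≠ 0 := by rintro rfl; exact hS₀ (map_zero _)
  have hv1 : vord v S ≤ d := hw₀ ▸ vord_le hS₀
  have hv2 : d ≤ vord v S := by
    by_contra h'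
    obtain ⟨β, hβ, hβw⟩ := exists_vord (v := v) hS
    exact hβ (hlow β (by omega))
  have hv : vord v S = d := le_antisymm hv1 hv2
  refine ⟨hv, MvPowerSeries.ext fun ε => ?_⟩
  rw [coeff_initPart, hv]
  by_cases h : wdeg v ε = d
  · rw [if_pos h]; exact heq ε h
  · rw [if_neg h]
    by_contra h'
    exact h (hsupp ε fun hh => h' hh.symm)

lemma homog_factor {v : Fin n → ℕ} {H K : MvPowerSeries (Fin n) R}
    (hH : H ≠ 0) (hK : K ≠ 0) (hbH : BddAbove (wset v H)) (hbK : BddAbove (wset v K))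
    {ξ : ℕ} (hom : ∀ ε, MvPowerSeries.coeff ε (H * K) ≠ 0 → wdeg v ε = ξ) :
    ∀ γ, MvPowerSeries.coeff γ H ≠ 0 → wdeg v γ = vord v H := by
  have hHK : H * K ≠ 0 := mul_ne_zero hH hK
  obtain ⟨ε₀, hε₀, hw₀⟩ := exists_vord (v := v) hHK
  have e0 : vord v H + vord v K = ξ := by
    rw [← hom ε₀ hε₀, hw₀, vord_mul hH hK]
  have hP : topPart v H * topPart v K ≠ 0 :=
    mul_ne_zero (topPart_ne_zero hbH hH) (topPart_ne_zero hbK hK)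
  obtain ⟨ε₁, hε₁⟩ := exists_coeff_ne_zero hP
  have hw₁ : wdeg v ε₁ = vtop v H + vtop v K := coeff_topPart_mul_ne_zero hε₁
  have hc₁ : MvPowerSeries.coeff ε₁ (H * K) ≠ 0 := by
    rw [coeff_mul_of_eq_vtop hbH hbK hw₁]; exact hε₁
  have e1 : vtop v H + vtop v K = ξ := by rw [← hom ε₁ hc₁, hw₁]
  have l1 : vord v H ≤ vtop v H := vord_le_vtop hbH hH
  have l2 : vord v K ≤ vtop v K := vord_le_vtop hbK hK
  intro γ hγ
  have h1 : vord v H ≤ wdeg v γ := vord_le hγ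
  have h2 : wdeg v γ ≤ vtop v H := le_vtop hbH hγ
  omega

omit [IsDomain R] in
lemma bddAbove_wset_coe (v : Fin n → ℕ) (P : MvPolynomial (Fin n) R) :
    BddAbove (wset v (P : MvPowerSeries (Fin n) R)) := by
  apply BddAbove.mono _ (Set.Finite.bddAbove (Set.Finite.image (wdeg v) P.support.finite_toSet))
  rintro w ⟨γ, hγ, rfl⟩
  exact ⟨γ, by simpa [MvPolynomial.mem_support_iff] using hγ, rfl⟩

lemma isUnit_of_dvd_homog {v : Fin n → ℕ} (hv : ∀ i, 0 < v i)
    {P D : MvPolynomial (Fin n) R} (hP : P ≠ 0)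
    {ξ : ℕ} (hhom : ∀ ε, MvPowerSeries.coeff ε (P : MvPowerSeries (Fin n) R) ≠ 0 →
      wdeg v ε = ξ)
    (hD : D ∣ P)
    (hu : IsUnit (MvPowerSeries.constantCoeff (D : MvPowerSeries (Fin n) R))) :
    IsUnit D := by
  obtain ⟨Q, hQ⟩ := hD
  have hD0 : D ≠ 0 := by rintro rfl; exact hP (by simp [hQ])
  have hQ0 : Q ≠ 0 := by rintro rfl; exact hP (by simp [hQ])
  have hcoe : (P : MvPowerSeries (Fin n) R)
      = (D : MvPowerSeries (Fin n) R) * (Q : MvPowerSeries (Fin n) R) := by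
    rw [hQ]; push_cast; ring
  have hD0' : (D : MvPowerSeries (Fin n) R) ≠ 0 := by simpa using hD0
  have hQ0' : (Q : MvPowerSeries (Fin n) R) ≠ 0 := by simpa using hQ0
  have hom' : ∀ ε, MvPowerSeries.coeff ε
      ((D : MvPowerSeries (Fin n) R) * (Q : MvPowerSeries (Fin n) R)) ≠ 0 → wdeg v ε = ξ := by
    intro ε hε; exact hhom ε (by rw [hcoe]; exact hε)
  have key := homog_factor hD0' hQ0' (bddAbove_wset_coe v D) (bddAbove_wset_coe v Q) hom'
  have hc0 : MvPowerSeries.coeff 0 (D : MvPowerSeries (Fin n) R) ≠ 0 := by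
    intro h0
    rw [← MvPowerSeries.coeff_zero_eq_constantCoeff, h0] at hu
    exact hu.ne_zero rfl
  have hvord : vord v (D : MvPowerSeries (Fin n) R) = 0 := by
    have := vord_le (v := v) hc0
    rw [wdeg_zero] at this
    omega
  have hDc : D = MvPolynomial.C (MvPolynomial.coeff 0 D) := by
    apply MvPolynomial.ext
    intro γ
    rw [MvPolynomial.coeff_C]
    by_cases hγ : 0 = γ
    · rw [if_pos hγ, ← hγ]
    · rw [if_neg hγ]
      by_contra hne
      have hw0 : wdeg v γ = 0 := by
        have := key γ (by rwa [MvPolynomial.coeff_coe]); rw [hvord] at this; exact this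
      exact hγ (eq_zero_of_wdeg_eq_zero hv hw0).symm
  have hcu : IsUnit (MvPolynomial.coeff 0 D) := by
    rwa [← MvPowerSeries.coeff_zero_eq_constantCoeff, MvPolynomial.coeff_coe] at hu
  rw [hDc]
  exact hcu.map MvPolynomial.C

omit [IsDomain R] in
lemma coe_polyOf {v : Fin n → ℕ} (hv : ∀ i, 0 < v i) {d : ℕ} {H : MvPowerSeries (Fin n) R}
    (hsupp : ∀ α, MvPowerSeries.coeff α H ≠ 0 → wdeg v α = d) :
    (polyOf v d H : MvPowerSeries (Fin n) R) = H := by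
  classical
  apply MvPowerSeries.ext; intro γ
  rw [MvPolynomial.coeff_coe, polyOf]
  rw [MvPolynomial.coeff_sum]
  simp only [MvPolynomial.coeff_monomial]
  rw [Finset.sum_ite_eq' _ γ (fun β => MvPowerSeries.coeff β H)]
  by_cases hmem : γ ∈ Finset.Iic (Finsupp.equivFunOnFinite.symm fun _ => d)
  · rw [if_pos hmem]
  · rw [if_neg hmem]
    symm
    by_contra hne
    apply hmem
    rw [Finset.mem_Iic]
    intro i
    have hle : γ i ≤ wdeg v γ := by
      calc γ i ≤ v i * γ i := Nat.le_mul_of_pos_left _ (hv i)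
        _ ≤ ∑ j, v j * γ j := Finset.single_le_sum (f := fun j => v j * γ j)
            (fun j _ => Nat.zero_le _) (Finset.mem_univ i)
    have : wdeg v γ = d := hsupp γ hne
    simpa using by omega
end Aux

theorem stmt_3 (R : Type*) [CommRing R] [IsDomain R] [UniqueFactorizationMonoid R]
    (n : ℕ) (F G A B : MvPowerSeries (Fin n) R) (hF : F ≠ 0) (hG : G ≠ 0)
    (hA : A ≠ 0) (hB : B ≠ 0)
    (v : Fin n → ℕ) (hv : ∀ i, 0 < v i) (ξ : ℕ)
    (hξF : vord v F = ξ) (hξG : vord v G = ξ)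
    (hcop : ∀ D : MvPowerSeries (Fin n) R,
      D ∣ initPart v F → D ∣ initPart v G → IsUnit D)
    (hmon : ∀ H ∈ Ideal.span {initPart v F, initPart v G}, ¬ IsMon H)
    (α : Fin n →₀ ℕ) (c : R) (hc : c ≠ 0) (t : ℕ) (ht : wdeg v α = t)
    (hrel : initPart v (A * F + B * G) = MvPowerSeries.monomial α c) :
    ξ ≤ vord v A ∧ ξ ≤ vord v B ∧ 2 * ξ < t := by
  classical
  set Fi := initPart v F with hFi_def
  set Gi := initPart v G with hGi_def
  set Ai := initPart v A with hAi_def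
  set Bi := initPart v B with hBi_def
  have hFi0 : Fi ≠ 0 := initPart_ne_zero hF
  have hGi0 : Gi ≠ 0 := initPart_ne_zero hG
  have hAi0 : Ai ≠ 0 := initPart_ne_zero hA
  have hBi0 : Bi ≠ 0 := initPart_ne_zero hB
  set a := vord v A with ha_def
  set b := vord v B with hb_def
  set S := A * F + B * G with hS_def
  -- the monomial is the initial part of S
  have hcS : MvPowerSeries.coeff α (initPart v S) ≠ 0 := by
    rw [hrel, MvPowerSeries.coeff_monomial, if_pos rfl]; exact hc
  have hwα : wdeg v α = vord v S := coeff_initPart_ne_zero hcS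
  have hS0 : S ≠ 0 := by
    rintro h0
    rw [coeff_initPart, h0, map_zero, if_neg] at hcS
    · exact hcS rfl
    · exact fun _ => hcS (by simp)
  have htS : vord v S = t := by omega
  -- orders of the products
  have hvAF : vord v (A * F) = a + ξ := by rw [vord_mul hA hF, hξF]
  have hvBG : vord v (B * G) = b + ξ := by rw [vord_mul hB hG, hξG]
  have hiAF : initPart v (A * F) = Ai * Fi := initPart_mul hA hF
  have hiBG : initPart v (B * G) = Bi * Gi := initPart_mul hB hG
  -- support of Ai*Fi lies in stratum a+ξ, etc.
  have hsAF : ∀ ε, MvPowerSeries.coeff ε (Ai * Fi) ≠ 0 → wdeg v ε = a + ξ := by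
    intro ε hε
    have := coeff_initPart_mul_ne_zero (v := v) (H := A) (K := F) hε
    omega
  have hsBG : ∀ ε, MvPowerSeries.coeff ε (Bi * Gi) ≠ 0 → wdeg v ε = b + ξ := by
    intro ε hε
    have := coeff_initPart_mul_ne_zero (v := v) (H := B) (K := G) hε
    omega
  -- low coefficients of S vanish
  have hlow : ∀ ε, wdeg v ε < min a b + ξ → MvPowerSeries.coeff ε S = 0 := by
    intro ε hε
    rw [hS_def, map_add, coeff_mul_of_lt (v := v) (H := A) (K := F) (by omega),
      coeff_mul_of_lt (v := v) (H := B) (K := G) (by omega), add_zero]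
  -- membership in the span
  have hmemAF : Ai * Fi ∈ Ideal.span {Fi, Gi} :=
    Ideal.mem_span_pair.mpr ⟨Ai, 0, by ring⟩
  have hmemBG : Bi * Gi ∈ Ideal.span {Fi, Gi} :=
    Ideal.mem_span_pair.mpr ⟨0, Bi, by ring⟩
  -- Case a < b : contradiction
  rcases lt_trichotomy a b with hab | hab | hab
  · exfalso
    have heqS : ∀ ε, wdeg v ε = a + ξ →
        MvPowerSeries.coeff ε S = MvPowerSeries.coeff ε (Ai * Fi) := by
      intro ε hε
      rw [hS_def, map_add, coeff_mul_of_lt (v := v) (H := B) (K := G) (by omega), add_zero,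
        coeff_mul_of_eq (v := v) (H := A) (K := F) (by omega), ← hiAF, initPart_mul hA hF]
    obtain ⟨_, hini⟩ := initPart_eq_of (mul_ne_zero hAi0 hFi0) hsAF
      (fun ε hε => hlow ε (by omega)) heqS
    exact hmon _ hmemAF ⟨α, c, hc, by rw [← hini, ← hrel]⟩
  · -- a = b
    set W := Ai * Fi + Bi * Gi with hW_def
    have hWmem : W ∈ Ideal.span {Fi, Gi} := Ideal.add_mem _ hmemAF hmemBG
    have hsW : ∀ ε, MvPowerSeries.coeff ε W ≠ 0 → wdeg v ε = a + ξ := by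
      intro ε hε
      rw [hW_def, map_add] at hε
      rcases ne_or_eq (MvPowerSeries.coeff ε (Ai * Fi)) 0 with h | h
      · exact hsAF ε h
      · rw [h, zero_add] at hε
        have := hsBG ε hε
        omega
    have heqS : ∀ ε, wdeg v ε = a + ξ →
        MvPowerSeries.coeff ε S = MvPowerSeries.coeff ε W := by
      intro ε hε
      rw [hS_def, hW_def, map_add, map_add,
        coeff_mul_of_eq (v := v) (H := A) (K := F) (by omega),
        coeff_mul_of_eq (v := v) (H := B) (K := G) (by omega)]
    by_cases hW0 : W = 0
    · -- cancellation case: transfer to polynomials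
      have hsA : ∀ γ, MvPowerSeries.coeff γ Ai ≠ 0 → wdeg v γ = a :=
        fun γ h => coeff_initPart_ne_zero h
      have hsB : ∀ γ, MvPowerSeries.coeff γ Bi ≠ 0 → wdeg v γ = b :=
        fun γ h => coeff_initPart_ne_zero h
      have hsF : ∀ γ, MvPowerSeries.coeff γ Fi ≠ 0 → wdeg v γ = ξ := by
        intro γ h; have := coeff_initPart_ne_zero h; omega
      have hsG : ∀ γ, MvPowerSeries.coeff γ Gi ≠ 0 → wdeg v γ = ξ := by
        intro γ h; have := coeff_initPart_ne_zero h; omega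
      set PA := polyOf v a Ai with hPA_def
      set PB := polyOf v b Bi with hPB_def
      set PF := polyOf v ξ Fi with hPF_def
      set PG := polyOf v ξ Gi with hPG_def
      have ePA : (PA : MvPowerSeries (Fin n) R) = Ai := coe_polyOf hv hsA
      have ePB : (PB : MvPowerSeries (Fin n) R) = Bi := coe_polyOf hv hsB
      have ePF : (PF : MvPowerSeries (Fin n) R) = Fi := coe_polyOf hv hsF
      have ePG : (PG : MvPowerSeries (Fin n) R) = Gi := coe_polyOf hv hsG
      have hPF0 : PF ≠ 0 := fun h => hFi0 (by rw [← ePF, h, MvPolynomial.coe_zero])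
      have hPG0 : PG ≠ 0 := fun h => hGi0 (by rw [← ePG, h, MvPolynomial.coe_zero])
      -- the polynomial identity
      have heq0 : PA * PF + PB * PG = 0 := by
        apply MvPolynomial.coe_injective (Fin n) R
        show ((PA * PF + PB * PG : MvPolynomial (Fin n) R) : MvPowerSeries (Fin n) R)
          = ((0 : MvPolynomial (Fin n) R) : MvPowerSeries (Fin n) R)
        rw [MvPolynomial.coe_add, MvPolynomial.coe_mul, MvPolynomial.coe_mul,
          ePA, ePB, ePF, ePG, MvPolynomial.coe_zero]
        exact hW0
      -- coprimality in the polynomial ring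
      have hrelp : IsRelPrime PF PG := by
        intro D hDF hDG
        by_contra hnu
        have hD0 : D ≠ 0 := by
          rintro rfl
          exact hPF0 (zero_dvd_iff.mp hDF)
        obtain ⟨p, hpirr, hpD⟩ := WfDvdMonoid.exists_irreducible_factor hnu hD0
        have hpF : p ∣ PF := hpD.trans hDF
        have hpG : p ∣ PG := hpD.trans hDG
        have h1 : (p : MvPowerSeries (Fin n) R) ∣ Fi := by
          obtain ⟨q, hq⟩ := hpF
          exact ⟨(q : MvPowerSeries (Fin n) R), by rw [← ePF, hq]; push_cast; ring⟩
        have h2 : (p : MvPowerSeries (Fin n) R) ∣ Gi := by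
          obtain ⟨q, hq⟩ := hpG
          exact ⟨(q : MvPowerSeries (Fin n) R), by rw [← ePG, hq]; push_cast; ring⟩
        have hu := hcop _ h1 h2
        have homF : ∀ ε, MvPowerSeries.coeff ε (PF : MvPowerSeries (Fin n) R) ≠ 0 →
            wdeg v ε = ξ := by
          intro ε hε; rw [ePF] at hε; exact hsF ε hε
        have := isUnit_of_dvd_homog hv hPF0 homF hpF
          (hu.map (MvPowerSeries.constantCoeff))
        exact hpirr.not_isUnit this
      -- divisibilities
      have hd1 : PG ∣ PA * PF := ⟨-PB, by linear_combination heq0⟩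
      have hd2 : PF ∣ PB * PG := ⟨-PA, by linear_combination heq0⟩
      have hGA : PG ∣ PA := hrelp.symm.dvd_of_dvd_mul_right hd1
      have hFB : PF ∣ PB := hrelp.dvd_of_dvd_mul_right hd2
      -- degree bounds
      have hξa : ξ ≤ a := by
        obtain ⟨T, hT⟩ := hGA
        have hT' : Ai = Gi * (T : MvPowerSeries (Fin n) R) := by
          rw [← ePA, ← ePG, hT]; push_cast; ring
        have hT0 : (T : MvPowerSeries (Fin n) R) ≠ 0 := by
          rintro h0
          rw [h0, mul_zero] at hT'
          exact hAi0 hT'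
        have : vord v Ai = vord v Gi + vord v (T : MvPowerSeries (Fin n) R) := by
          rw [hT', vord_mul hGi0 hT0]
        rw [hAi_def, vord_initPart hA] at this
        rw [hGi_def, vord_initPart hG, hξG] at this
        omega
      have hξb : ξ ≤ b := by
        obtain ⟨T, hT⟩ := hFB
        have hT' : Bi = Fi * (T : MvPowerSeries (Fin n) R) := by
          rw [← ePB, ← ePF, hT]; push_cast; ring
        have hT0 : (T : MvPowerSeries (Fin n) R) ≠ 0 := by
          rintro h0
          rw [h0, mul_zero] at hT'
          exact hBi0 hT'
        have : vord v Bi = vord v Fi + vord v (T : MvPowerSeries (Fin n) R) := by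
          rw [hT', vord_mul hFi0 hT0]
        rw [hBi_def, vord_initPart hB] at this
        rw [hFi_def, vord_initPart hF, hξF] at this
        omega
      -- the order bound for t
      have hzero : ∀ ε, wdeg v ε ≤ a + ξ → MvPowerSeries.coeff ε S = 0 := by
        intro ε hε
        rcases lt_or_eq_of_le hε with h | h
        · exact hlow ε (by omega)
        · rw [heqS ε h, hW0, map_zero]
      have hts : a + ξ < t := by
        by_contra h'
        obtain ⟨β, hβ, hβw⟩ := exists_vord (v := v) hS0
        exact hβ (hzero β (by omega))
      exact ⟨hξa, hξb, by omega⟩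
    · -- W ≠ 0 : S has monomial initial part in the ideal, contradiction
      exfalso
      obtain ⟨_, hini⟩ := initPart_eq_of hW0 hsW
        (fun ε hε => hlow ε (by omega)) heqS
      exact hmon _ hWmem ⟨α, c, hc, by rw [← hini, ← hrel]⟩
  · -- b < a : contradiction
    exfalso
    have heqS : ∀ ε, wdeg v ε = b + ξ →
        MvPowerSeries.coeff ε S = MvPowerSeries.coeff ε (Bi * Gi) := by
      intro ε hε
      rw [hS_def, map_add, coeff_mul_of_lt (v := v) (H := A) (K := F) (by omega), zero_add,
        coeff_mul_of_eq (v := v) (H := B) (K := G) (by omega)]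
    obtain ⟨_, hini⟩ := initPart_eq_of (mul_ne_zero hBi0 hGi0) hsBG
      (fun ε hε => hlow ε (by omega)) heqS
    exact hmon _ hmemBG ⟨α, c, hc, by rw [← hini, ← hrel]⟩
end

section
/- Let F ∈ ℂ[x,y,z] be homogeneous of degree α > 0 that can be written F = P²·R + c·x^α where P, R ∈ ℂ[x,y,z] are homogeneous, P is not a monomial, c ∈ ℂ, and F depends essentially on all three variables (so that N(F) is 2-dimensional). Then there exists an edge T of the Newton polytope N(F) and a weight vector v ∈ ℤ³ supporting N(F) along T such that F_v = (P_v)²·R_v; in particular F_v has a multiple non-monomial factor. -/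
open MvPolynomial

/-- The Newton polytope of a polynomial in three variables. -/
noncomputable def newtonPolytope3 (f : MvPolynomial (Fin 3) ℂ) : Set (Fin 3 → ℝ) :=
  convexHull ℝ ((fun (α : Fin 3 →₀ ℕ) (i : Fin 3) => (α i : ℝ)) '' (f.support : Set (Fin 3 →₀ ℕ)))

/-- `v`-weighted degree (integer weights) of an exponent. -/
def zwdeg (v : Fin 3 → ℤ) (α : Fin 3 →₀ ℕ) : ℤ := ∑ i, v i * (α i : ℤ)

/-- The `v`-initial part of a polynomial: the sum of its terms of minimal `v`-weighted degree. -/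
noncomputable def pInit (v : Fin 3 → ℤ) (F : MvPolynomial (Fin 3) ℂ) : MvPolynomial (Fin 3) ℂ :=
  ∑ α ∈ F.support, if ∀ β ∈ F.support, zwdeg v α ≤ zwdeg v β
    then MvPolynomial.monomial α (MvPolynomial.coeff α F) else 0

/-- The face of a set `C ⊆ ℝ³` supported by the (inward) vector `v`. -/
def faceOf (v : Fin 3 → ℤ) (C : Set (Fin 3 → ℝ)) : Set (Fin 3 → ℝ) :=
  {x ∈ C | ∀ y ∈ C, ∑ i, (v i : ℝ) * x i ≤ ∑ i, (v i : ℝ) * y i}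

/-- A monomial `c·x^a y^b z^c`. -/
def IsMonP3 (P : MvPolynomial (Fin 3) ℂ) : Prop :=
  ∃ (α : Fin 3 →₀ ℕ) (c : ℂ), P = MvPolynomial.monomial α c


noncomputable def minSet (v : Fin 3 → ℤ) (F : MvPolynomial (Fin 3) ℂ) : Finset (Fin 3 →₀ ℕ) :=
  F.support.filter (fun α => ∀ β ∈ F.support, zwdeg v α ≤ zwdeg v β)

lemma zwdeg_add (v : Fin 3 → ℤ) (α β : Fin 3 →₀ ℕ) :
    zwdeg v (α + β) = zwdeg v α + zwdeg v β := by
  unfold zwdeg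
  rw [← Finset.sum_add_distrib]
  refine Finset.sum_congr rfl fun i _ => ?_
  rw [Finsupp.add_apply]
  push_cast
  ring

lemma zwdeg_neg (v : Fin 3 → ℤ) (α : Fin 3 →₀ ℕ) : zwdeg (-v) α = - zwdeg v α := by
  unfold zwdeg
  rw [← Finset.sum_neg_distrib]
  refine Finset.sum_congr rfl fun i _ => ?_
  simp [neg_mul]

lemma coeff_pInit (v : Fin 3 → ℤ) (F : MvPolynomial (Fin 3) ℂ) (α : Fin 3 →₀ ℕ) :
    MvPolynomial.coeff α (pInit v F) = if α ∈ minSet v F then MvPolynomial.coeff α F else 0 := by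
  unfold pInit minSet
  rw [MvPolynomial.coeff_sum]
  have step : ∀ β ∈ F.support,
      MvPolynomial.coeff α (if ∀ γ ∈ F.support, zwdeg v β ≤ zwdeg v γ
        then MvPolynomial.monomial β (MvPolynomial.coeff β F) else 0)
      = if β = α then (if ∀ γ ∈ F.support, zwdeg v α ≤ zwdeg v γ
          then MvPolynomial.coeff α F else 0) else 0 := by
    intro β _
    by_cases hba : β = α
    · subst hba
      split <;> simp [MvPolynomial.coeff_monomial, *]
    · split <;> simp [MvPolynomial.coeff_monomial, hba]
  rw [Finset.sum_congr rfl step, Finset.sum_ite_eq' F.support α]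
  by_cases h : α ∈ F.support
  · by_cases h2 : ∀ γ ∈ F.support, zwdeg v α ≤ zwdeg v γ
    · rw [if_pos h, if_pos h2, if_pos (Finset.mem_filter.mpr ⟨h, h2⟩)]
    · rw [if_pos h, if_neg h2, if_neg (fun hc => h2 (Finset.mem_filter.mp hc).2)]
  · rw [if_neg h, if_neg (fun hc => h (Finset.mem_filter.mp hc).1)]

lemma support_pInit (v : Fin 3 → ℤ) (F : MvPolynomial (Fin 3) ℂ) :
    (pInit v F).support = minSet v F := by
  ext α
  rw [MvPolynomial.mem_support_iff, coeff_pInit]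
  constructor
  · intro h
    by_contra hc
    rw [if_neg hc] at h
    exact h rfl
  · intro h
    rw [if_pos h]
    exact MvPolynomial.mem_support_iff.mp (Finset.mem_filter.mp h).1

lemma minSet_subset (v : Fin 3 → ℤ) (F : MvPolynomial (Fin 3) ℂ) : minSet v F ⊆ F.support :=
  Finset.filter_subset _ _

lemma minSet_min (v : Fin 3 → ℤ) {F : MvPolynomial (Fin 3) ℂ} {α : Fin 3 →₀ ℕ}
    (h : α ∈ minSet v F) : ∀ β ∈ F.support, zwdeg v α ≤ zwdeg v β :=
  (Finset.mem_filter.mp h).2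

lemma minSet_nonempty (v : Fin 3 → ℤ) {F : MvPolynomial (Fin 3) ℂ} (hF : F ≠ 0) :
    (minSet v F).Nonempty := by
  obtain ⟨α, hα, hmin⟩ := Finset.exists_min_image F.support (zwdeg v)
    (MvPolynomial.support_nonempty.mpr hF)
  exact ⟨α, Finset.mem_filter.mpr ⟨hα, hmin⟩⟩

lemma pInit_ne_zero (v : Fin 3 → ℤ) {F : MvPolynomial (Fin 3) ℂ} (hF : F ≠ 0) :
    pInit v F ≠ 0 := by
  intro h
  obtain ⟨α, hα⟩ := minSet_nonempty v hF
  have := support_pInit v F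
  rw [h] at this
  simp only [MvPolynomial.support_zero] at this
  rw [← this] at hα
  exact absurd hα (Finset.notMem_empty α)

lemma mem_minSet_iff (v : Fin 3 → ℤ) {F : MvPolynomial (Fin 3) ℂ} {α : Fin 3 →₀ ℕ}
    {α₀ : Fin 3 →₀ ℕ} (hα₀ : α₀ ∈ minSet v F) :
    α ∈ minSet v F ↔ α ∈ F.support ∧ zwdeg v α = zwdeg v α₀ := by
  constructor
  · intro h
    refine ⟨minSet_subset v F h, le_antisymm (minSet_min v h _ (minSet_subset v F hα₀))
      (minSet_min v hα₀ _ (minSet_subset v F h))⟩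
  · rintro ⟨h1, h2⟩
    refine Finset.mem_filter.mpr ⟨h1, fun β hβ => h2 ▸ minSet_min v hα₀ β hβ⟩

lemma coeff_sub_pInit (v : Fin 3 → ℤ) (F : MvPolynomial (Fin 3) ℂ) (α : Fin 3 →₀ ℕ) :
    MvPolynomial.coeff α (F - pInit v F) = if α ∈ minSet v F then 0 else MvPolynomial.coeff α F := by
  rw [MvPolynomial.coeff_sub, coeff_pInit]
  split <;> ring

/-- Key decomposition lemma: if `F = A + B` with `A` pure of weight `d` and `B` strictly
above `d`, then `pInit v F = A`. -/
lemma pInit_eq_of_decomp (v : Fin 3 → ℤ) {F A B : MvPolynomial (Fin 3) ℂ}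
    (hFAB : F = A + B) (hA : A ≠ 0) (d : ℤ)
    (hdA : ∀ α ∈ A.support, zwdeg v α = d)
    (hdB : ∀ α ∈ B.support, d < zwdeg v α) : pInit v F = A := by
  have hcoeff : ∀ α, MvPolynomial.coeff α F = MvPolynomial.coeff α A + MvPolynomial.coeff α B := by
    intro α; rw [hFAB, MvPolynomial.coeff_add]
  have hBA : ∀ α ∈ A.support, MvPolynomial.coeff α B = 0 := by
    intro α hα
    by_contra hc
    exact absurd (hdA α hα) (ne_of_gt (hdB α (MvPolynomial.mem_support_iff.mpr hc)))
  have hAB : ∀ α ∈ B.support, MvPolynomial.coeff α A = 0 := by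
    intro α hα
    by_contra hc
    exact absurd (hdA α (MvPolynomial.mem_support_iff.mpr hc)) (ne_of_gt (hdB α hα))
  have hAF : A.support ⊆ F.support := by
    intro α hα
    rw [MvPolynomial.mem_support_iff, hcoeff, hBA α hα, add_zero]
    exact MvPolynomial.mem_support_iff.mp hα
  have hFsub : F.support ⊆ A.support ∪ B.support := by
    intro α hα
    rw [MvPolynomial.mem_support_iff, hcoeff] at hα
    by_contra hc
    simp only [Finset.mem_union, not_or, MvPolynomial.mem_support_iff, not_not] at hc
    rw [hc.1, hc.2, add_zero] at hα
    exact hα rfl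
  obtain ⟨α₀, hα₀A⟩ := MvPolynomial.support_nonempty.mpr hA
  have hminA : minSet v F = A.support := by
    ext α
    constructor
    · intro h
      rcases Finset.mem_union.mp (hFsub (minSet_subset v F h)) with h1 | h1
      · exact h1
      · exfalso
        have h2 := minSet_min v h α₀ (hAF hα₀A)
        rw [hdA α₀ hα₀A] at h2
        exact absurd (lt_of_lt_of_le (hdB α h1) h2) (lt_irrefl _)
    · intro h
      refine Finset.mem_filter.mpr ⟨hAF h, fun β hβ => ?_⟩
      rw [hdA α h]
      rcases Finset.mem_union.mp (hFsub hβ) with h1 | h1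
      · rw [hdA β h1]
      · exact le_of_lt (hdB β h1)
  ext α
  rw [coeff_pInit, hminA]
  by_cases h : α ∈ A.support
  · rw [if_pos h, hcoeff, hBA α h, add_zero]
  · rw [if_neg h, MvPolynomial.notMem_support_iff.mp h]

lemma support_mul_wt (v : Fin 3 → ℤ) {G H : MvPolynomial (Fin 3) ℂ} {dG dH : ℤ}
    (hG : ∀ α ∈ G.support, dG ≤ zwdeg v α) (hH : ∀ α ∈ H.support, dH ≤ zwdeg v α) :
    ∀ α ∈ (G * H).support, dG + dH ≤ zwdeg v α := by
  intro α hα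
  obtain ⟨β, hβ, γ, hγ, rfl⟩ := Finset.mem_add.mp (MvPolynomial.support_mul G H hα)
  rw [zwdeg_add]
  exact add_le_add (hG β hβ) (hH γ hγ)

lemma pInit_mul (v : Fin 3 → ℤ) {G H : MvPolynomial (Fin 3) ℂ} (hG : G ≠ 0) (hH : H ≠ 0) :
    pInit v (G * H) = pInit v G * pInit v H := by
  obtain ⟨αG, hαG⟩ := minSet_nonempty v hG
  obtain ⟨αH, hαH⟩ := minSet_nonempty v hH
  set dG := zwdeg v αG with hdG
  set dH := zwdeg v αH with hdH
  have hGw : ∀ α ∈ (pInit v G).support, zwdeg v α = dG := by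
    intro α hα
    rw [support_pInit] at hα
    exact ((mem_minSet_iff v hαG).mp hα).2
  have hHw : ∀ α ∈ (pInit v H).support, zwdeg v α = dH := by
    intro α hα
    rw [support_pInit] at hα
    exact ((mem_minSet_iff v hαH).mp hα).2
  have hGmin : ∀ α ∈ G.support, dG ≤ zwdeg v α := minSet_min v hαG
  have hHmin : ∀ α ∈ H.support, dH ≤ zwdeg v α := minSet_min v hαH
  have hG's : ∀ α ∈ (G - pInit v G).support, dG < zwdeg v α := by
    intro α hα
    have h := MvPolynomial.mem_support_iff.mp hα
    rw [coeff_sub_pInit] at h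
    by_cases hm : α ∈ minSet v G
    · rw [if_pos hm] at h; exact absurd rfl h
    · rw [if_neg hm] at h
      have hαs : α ∈ G.support := MvPolynomial.mem_support_iff.mpr h
      rcases lt_or_eq_of_le (hGmin α hαs) with h1 | h1
      · exact h1
      · exact absurd ((mem_minSet_iff v hαG).mpr ⟨hαs, h1.symm⟩) hm
  have hH's : ∀ α ∈ (H - pInit v H).support, dH < zwdeg v α := by
    intro α hα
    have h := MvPolynomial.mem_support_iff.mp hα
    rw [coeff_sub_pInit] at h
    by_cases hm : α ∈ minSet v H
    · rw [if_pos hm] at h; exact absurd rfl h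
    · rw [if_neg hm] at h
      have hαs : α ∈ H.support := MvPolynomial.mem_support_iff.mpr h
      rcases lt_or_eq_of_le (hHmin α hαs) with h1 | h1
      · exact h1
      · exact absurd ((mem_minSet_iff v hαH).mpr ⟨hαs, h1.symm⟩) hm
  have hA : pInit v G * pInit v H ≠ 0 := mul_ne_zero (pInit_ne_zero v hG) (pInit_ne_zero v hH)
  refine pInit_eq_of_decomp v (F := G * H) (A := pInit v G * pInit v H)
    (B := pInit v G * (H - pInit v H) + (G - pInit v G) * H) (by ring) hA (dG + dH) ?_ ?_
  · intro α hα
    obtain ⟨β, hβ, γ, hγ, rfl⟩ := Finset.mem_add.mp (MvPolynomial.support_mul _ _ hα)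
    rw [zwdeg_add, hGw β hβ, hHw γ hγ]
  · intro α hα
    rcases Finset.mem_union.mp (MvPolynomial.support_add hα) with h1 | h1
    · obtain ⟨β, hβ, γ, hγ, rfl⟩ := Finset.mem_add.mp (MvPolynomial.support_mul _ _ h1)
      rw [zwdeg_add, hGw β hβ]
      exact add_lt_add_right (hH's γ hγ) dG
    · obtain ⟨β, hβ, γ, hγ, rfl⟩ := Finset.mem_add.mp (MvPolynomial.support_mul _ _ h1)
      rw [zwdeg_add]
      have h2 : β ∈ G.support := by
        have := MvPolynomial.mem_support_iff.mp hβ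
        rw [coeff_sub_pInit] at this
        split at this
        · exact absurd rfl this
        · exact MvPolynomial.mem_support_iff.mpr this
      calc dG + dH < zwdeg v β + dH := by exact add_lt_add_left (hG's β hβ) dH
        _ ≤ zwdeg v β + zwdeg v γ := add_le_add_right (hHmin γ hγ) _
      
lemma minSet_mul_wt (v : Fin 3 → ℤ) {G H : MvPolynomial (Fin 3) ℂ} (hG : G ≠ 0) (hH : H ≠ 0)
    {αG αH : Fin 3 →₀ ℕ} (hαG : αG ∈ minSet v G) (hαH : αH ∈ minSet v H) :
    ∀ α ∈ minSet v (G * H), zwdeg v α = zwdeg v αG + zwdeg v αH := by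
  intro α hα
  rw [← support_pInit, pInit_mul v hG hH] at hα
  obtain ⟨β, hβ, γ, hγ, rfl⟩ := Finset.mem_add.mp (MvPolynomial.support_mul _ _ hα)
  rw [support_pInit] at hβ hγ
  rw [zwdeg_add, ((mem_minSet_iff v hαG).mp hβ).2, ((mem_minSet_iff v hαH).mp hγ).2]

lemma isMon_iff_card (P : MvPolynomial (Fin 3) ℂ) : IsMonP3 P ↔ P.support.card ≤ 1 := by
  constructor
  · rintro ⟨α, c, rfl⟩
    rw [MvPolynomial.support_monomial]
    split
    · simp
    · simp
  · intro h
    interval_cases hc : P.support.card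
    · exact ⟨0, 0, by rw [Finset.card_eq_zero] at hc
                      simp [MvPolynomial.support_eq_empty.mp hc]⟩
    · obtain ⟨α, hα⟩ := Finset.card_eq_one.mp hc
      refine ⟨α, MvPolynomial.coeff α P, ?_⟩
      ext β
      rw [MvPolynomial.coeff_monomial]
      split
      · rename_i h1; rw [h1]
      · rename_i h1
        apply MvPolynomial.notMem_support_iff.mp
        rw [hα]
        simp [Ne.symm h1]

lemma not_isMon_iff (P : MvPolynomial (Fin 3) ℂ) :
    ¬ IsMonP3 P ↔ ∃ α ∈ P.support, ∃ β ∈ P.support, α ≠ β := by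
  rw [isMon_iff_card, not_le, ← Finset.one_lt_card]

/-- A non-monomial times a nonzero polynomial is a non-monomial. -/
lemma not_isMon_mul {G H : MvPolynomial (Fin 3) ℂ} (hG : ¬ IsMonP3 G) (hH : H ≠ 0) :
    ¬ IsMonP3 (G * H) := by
  obtain ⟨α, hα, β, hβ, hab⟩ := (not_isMon_iff G).mp hG
  have hG0 : G ≠ 0 := by rintro rfl; simp at hα
  obtain ⟨i, hi⟩ : ∃ i, α i ≠ β i := by
    by_contra hc
    push_neg at hc
    exact hab (Finsupp.ext hc)
  set w : Fin 3 → ℤ := Pi.single i 1 with hw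
  have hwd : ∀ γ : Fin 3 →₀ ℕ, zwdeg w γ = (γ i : ℤ) := by
    intro γ
    unfold zwdeg
    rw [Finset.sum_eq_single i]
    · simp [hw]
    · intro b _ hb; simp [hw, Pi.single_apply, hb]
    · simp
  -- minimizers for w and -w in supports
  obtain ⟨αG, hαG⟩ := minSet_nonempty w hG0
  obtain ⟨αH, hαH⟩ := minSet_nonempty w hH
  obtain ⟨βG, hβG⟩ := minSet_nonempty (-w) hG0
  obtain ⟨βH, hβH⟩ := minSet_nonempty (-w) hH
  obtain ⟨δ₁, hδ₁⟩ := minSet_nonempty w (mul_ne_zero hG0 hH)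
  obtain ⟨δ₂, hδ₂⟩ := minSet_nonempty (-w) (mul_ne_zero hG0 hH)
  have h1 := minSet_mul_wt w hG0 hH hαG hαH δ₁ hδ₁
  have h2 := minSet_mul_wt (-w) hG0 hH hβG hβH δ₂ hδ₂
  rw [zwdeg_neg, zwdeg_neg, zwdeg_neg] at h2
  have hlt : zwdeg w δ₁ < zwdeg w δ₂ := by
    have hGlt : zwdeg w αG < zwdeg w βG := by
      have e1 : zwdeg w αG ≤ zwdeg w α := minSet_min w hαG α hα
      have e2 : zwdeg w αG ≤ zwdeg w β := minSet_min w hαG β hβ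
      have e3 : - zwdeg w βG ≤ - zwdeg w α := by
        have := minSet_min (-w) hβG α hα; rwa [zwdeg_neg, zwdeg_neg] at this
      have e4 : - zwdeg w βG ≤ - zwdeg w β := by
        have := minSet_min (-w) hβG β hβ; rwa [zwdeg_neg, zwdeg_neg] at this
      have hne : zwdeg w α ≠ zwdeg w β := by
        rw [hwd, hwd]; exact_mod_cast hi
      rcases hne.lt_or_gt with h | h
      · exact lt_of_le_of_lt e1 (lt_of_lt_of_le h (neg_le_neg_iff.mp e4))
      · exact lt_of_le_of_lt e2 (lt_of_lt_of_le h (neg_le_neg_iff.mp e3))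
    have hHle : zwdeg w αH ≤ zwdeg w βH := by
      have := minSet_min w hαH βH (minSet_subset _ _ hβH)
      exact this
    rw [h1]
    omega
  rw [not_isMon_iff]
  exact ⟨δ₁, minSet_subset _ _ hδ₁, δ₂, minSet_subset _ _ hδ₂,
    fun h => absurd (congrArg (zwdeg w) h) (ne_of_lt hlt)⟩
noncomputable def ldir (w1 w2 : ℝ) : Fin 3 → ℝ := ![w2 - w1, -w2, w1]

noncomputable def tcoord (w1 w2 : ℝ) (x0 x : Fin 3 → ℝ) : ℝ :=
  ((x 2 - x0 2) * w1 - (x 1 - x0 1) * w2) / (w1^2 + w2^2)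

lemma ldir_ne_zero {w1 w2 : ℝ} (hw : ¬(w1 = 0 ∧ w2 = 0)) : ldir w1 w2 ≠ 0 := by
  intro h
  have h1 := congrFun h 1
  have h2 := congrFun h 2
  simp [ldir] at h1 h2
  exact hw ⟨h2, h1⟩

lemma lineParam {w1 w2 : ℝ} (hw : ¬(w1 = 0 ∧ w2 = 0)) {m s : ℝ} {x0 x : Fin 3 → ℝ}
    (h01 : w1 * x0 1 + w2 * x0 2 = m) (h02 : x0 0 + x0 1 + x0 2 = s)
    (hx1 : w1 * x 1 + w2 * x 2 = m) (hx2 : x 0 + x 1 + x 2 = s) :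
    x = x0 + tcoord w1 w2 x0 x • ldir w1 w2 := by
  have hQ : (0:ℝ) < w1^2 + w2^2 := by
    have h' : w1 ≠ 0 ∨ w2 ≠ 0 := by tauto
    rcases h' with h | h
    · have : (0:ℝ) < w1^2 := by positivity
      nlinarith [sq_nonneg w2]
    · have : (0:ℝ) < w2^2 := by positivity
      nlinarith [sq_nonneg w1]
  have hQ' : w1^2 + w2^2 ≠ 0 := ne_of_gt hQ
  have key : w1 * (x 1 - x0 1) + w2 * (x 2 - x0 2) = 0 := by linarith
  have key2 : (x 0 - x0 0) + (x 1 - x0 1) + (x 2 - x0 2) = 0 := by linarith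
  have c0 : x 0 = x0 0 + tcoord w1 w2 x0 x * (w2 - w1) := by
    unfold tcoord
    field_simp
    linear_combination (-(w1 + w2)) * key + (w1^2 + w2^2) * key2
  have c1 : x 1 = x0 1 + tcoord w1 w2 x0 x * (-w2) := by
    unfold tcoord
    field_simp
    linear_combination w1 * key
  have c2 : x 2 = x0 2 + tcoord w1 w2 x0 x * w1 := by
    unfold tcoord
    field_simp
    linear_combination w2 * key
  funext i
  have hδ0 : ldir w1 w2 0 = w2 - w1 := rfl
  have hδ1 : ldir w1 w2 1 = -w2 := rfl
  have hδ2 : ldir w1 w2 2 = w1 := rfl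
  fin_cases i
  · show x 0 = x0 0 + tcoord w1 w2 x0 x * ldir w1 w2 0
    rw [hδ0]; exact c0
  · show x 1 = x0 1 + tcoord w1 w2 x0 x * ldir w1 w2 1
    rw [hδ1]; exact c1
  · show x 2 = x0 2 + tcoord w1 w2 x0 x * ldir w1 w2 2
    rw [hδ2]; exact c2

lemma hull_segment {w1 w2 : ℝ} (hw : ¬(w1 = 0 ∧ w2 = 0)) (s : Finset (Fin 3 → ℝ))
    (x0 : Fin 3 → ℝ)
    (hparam : ∀ x ∈ s, x = x0 + tcoord w1 w2 x0 x • ldir w1 w2)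
    (h2 : ∃ x ∈ s, ∃ y ∈ s, x ≠ y) :
    ∃ p q, p ≠ q ∧ convexHull ℝ (↑s : Set (Fin 3 → ℝ)) = segment ℝ p q := by
  set tf := tcoord w1 w2 x0 with htf
  set δ := ldir w1 w2 with hδdef
  have hδ : δ ≠ 0 := ldir_ne_zero hw
  obtain ⟨x, hx, y, hy, hxy⟩ := h2
  obtain ⟨p, hp, hpmin⟩ := s.exists_min_image tf ⟨x, hx⟩
  obtain ⟨q, hq, hqmax⟩ := s.exists_max_image tf ⟨x, hx⟩
  have htne : tf x ≠ tf y := by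
    intro h
    apply hxy
    have e1 := hparam x hx
    have e2 := hparam y hy
    rw [e1, e2, h]
  have hlt : tf p < tf q := by
    rcases lt_or_ge (tf x) (tf y) with h | h
    · exact lt_of_le_of_lt (hpmin x hx) (lt_of_lt_of_le h (hqmax y hy))
    · exact lt_of_le_of_lt (hpmin y hy) (lt_of_lt_of_le (lt_of_le_of_ne h (Ne.symm htne)) (hqmax x hx))
  have hpq : p ≠ q := fun h => absurd (congrArg tf h) (ne_of_lt hlt)
  refine ⟨p, q, hpq, subset_antisymm ?_ ?_⟩
  · apply convexHull_min ?_ (convex_segment p q)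
    intro z hz
    have hz' : z ∈ s := hz
    have hz2 := hparam z hz'
    have hp2 := hparam p hp
    have hq2 := hparam q hq
    set tz := tf z with htz
    set tp := tf p with htp
    set tq := tf q with htq
    have hd : (0:ℝ) < tq - tp := by
      have := hlt; linarith
    refine ⟨(tq - tz)/(tq - tp), (tz - tp)/(tq - tp),
      div_nonneg (by linarith [hqmax z hz']) (le_of_lt hd),
      div_nonneg (by linarith [hpmin z hz']) (le_of_lt hd), by field_simp; ring, ?_⟩
    rw [hz2, hp2, hq2]
    funext i
    simp only [Pi.add_apply, Pi.smul_apply, smul_eq_mul]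
    field_simp
    ring
  · rw [← convexHull_pair]
    apply convexHull_mono
    intro z hz
    rcases hz with h | h
    · exact h ▸ hp
    · exact h ▸ hq

lemma faceOf_hull (v : Fin 3 → ℤ) (s : Finset (Fin 3 → ℝ)) (hs : s.Nonempty) :
    faceOf v (convexHull ℝ (↑s : Set (Fin 3 → ℝ))) =
      convexHull ℝ (↑(s.filter (fun x => ∀ y ∈ s, (∑ i, (v i:ℝ) * x i) ≤ ∑ i, (v i:ℝ) * y i)) :
        Set (Fin 3 → ℝ)) := by
  classical
  set L : (Fin 3 → ℝ) → ℝ := fun x => ∑ i, (v i : ℝ) * x i with hL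
  have hLlin : ∀ (t : Finset (Fin 3 → ℝ)) (wt : (Fin 3 → ℝ) → ℝ),
      L (∑ y ∈ t, wt y • y) = ∑ y ∈ t, wt y * L y := by
    intro t wt
    simp only [hL, Finset.sum_apply, Pi.smul_apply, smul_eq_mul, Finset.mul_sum]
    rw [Finset.sum_comm]
    refine Finset.sum_congr rfl fun y _ => ?_
    refine Finset.sum_congr rfl fun i _ => ?_
    ring
  obtain ⟨z, hz, hzmin⟩ := s.exists_min_image L hs
  have hbound : ∀ x ∈ convexHull ℝ (↑s : Set (Fin 3 → ℝ)), L z ≤ L x := by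
    intro x hx
    rw [Finset.convexHull_eq] at hx
    obtain ⟨wt, h0, h1, hcm⟩ := hx
    rw [← hcm, Finset.centerMass_eq_of_sum_1 _ _ h1]
    simp only [id_eq]
    show L z ≤ L _
    rw [hLlin]
    calc L z = ∑ y ∈ s, wt y * L z := by rw [← Finset.sum_mul, h1, one_mul]
      _ ≤ ∑ y ∈ s, wt y * L y :=
        Finset.sum_le_sum fun y hy => mul_le_mul_of_nonneg_left (hzmin y hy) (h0 y hy)
  have hfiltval : ∀ y ∈ s.filter (fun x => ∀ y' ∈ s, L x ≤ L y'), L y = L z := by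
    intro y hy
    obtain ⟨hy1, hy2⟩ := Finset.mem_filter.mp hy
    exact le_antisymm (hy2 z hz) (hzmin y hy1)
  ext x
  constructor
  · rintro ⟨hxC, hxmin⟩
    have hLx : L x = L z :=
      le_antisymm (hxmin z (subset_convexHull ℝ _ hz)) (hbound x hxC)
    rw [Finset.convexHull_eq] at hxC
    obtain ⟨wt, h0, h1, hcm⟩ := hxC
    have hsum0 : ∑ y ∈ s, wt y * (L y - L z) = 0 := by
      have hx' : ∑ y ∈ s, wt y * L y = L x := by
        rw [← hcm, Finset.centerMass_eq_of_sum_1 _ _ h1]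
        simp only [id_eq]
        exact (hLlin s wt).symm
      have : ∑ y ∈ s, wt y * (L y - L z) = (∑ y ∈ s, wt y * L y) - (∑ y ∈ s, wt y) * L z := by
        rw [Finset.sum_mul, ← Finset.sum_sub_distrib]
        exact Finset.sum_congr rfl fun y _ => by ring
      rw [this, hx', h1, hLx]
      ring
    have hzero : ∀ y ∈ s, wt y * (L y - L z) = 0 :=
      (Finset.sum_eq_zero_iff_of_nonneg (fun y hy =>
        mul_nonneg (h0 y hy) (sub_nonneg.mpr (hzmin y hy)))).mp hsum0
    have hx2 : (s.filter (fun y => wt y ≠ 0)).centerMass wt id = x := by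
      rw [Finset.centerMass_filter_ne_zero, hcm]
    rw [← hx2]
    apply Finset.centerMass_mem_convexHull
    · intro y hy
      exact h0 y (Finset.mem_filter.mp hy).1
    · rw [Finset.sum_filter_ne_zero, h1]
      exact one_pos
    · intro y hy
      obtain ⟨hy1, hy2⟩ := Finset.mem_filter.mp hy
      have hLy : L y = L z := by
        rcases mul_eq_zero.mp (hzero y hy1) with h | h
        · exact absurd h hy2
        · linarith [sub_eq_zero.mp h]
      show (y : Fin 3 → ℝ) ∈ _
      refine Finset.mem_coe.mpr (Finset.mem_filter.mpr ⟨hy1, fun y' hy' => ?_⟩)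
      show L y ≤ L y'
      rw [hLy]
      exact hzmin y' hy'
  · intro hx
    have hsub : (↑(s.filter (fun x => ∀ y' ∈ s, L x ≤ L y')) : Set (Fin 3 → ℝ)) ⊆ ↑s := by
      intro y hy
      exact Finset.mem_coe.mpr (Finset.mem_filter.mp (Finset.mem_coe.mp hy)).1
    have hxC : x ∈ convexHull ℝ (↑s : Set (Fin 3 → ℝ)) := convexHull_mono hsub hx
    refine ⟨hxC, fun y hy => ?_⟩
    have hLx : L x = L z := by
      rw [Finset.convexHull_eq] at hx
      obtain ⟨wt, h0, h1, hcm⟩ := hx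
      rw [← hcm, Finset.centerMass_eq_of_sum_1 _ _ h1]
      simp only [id_eq]
      show L _ = L z
      rw [hLlin]
      calc ∑ y' ∈ _, wt y' * L y' = ∑ y' ∈ _, wt y' * L z :=
            Finset.sum_congr rfl fun y' hy' => by rw [hfiltval y' hy']
        _ = L z := by rw [← Finset.sum_mul, h1, one_mul]
    show L x ≤ L y
    rw [hLx]
    exact hbound y hy

/-- The pencil / rotating-hyperplane lemma. -/
lemma pencil {X : Type*} [DecidableEq X] (T : Finset X) (la lb : X → ℤ)
    (hlb : ∃ s ∈ T, ∃ s' ∈ T, lb s ≠ lb s') :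
    ∃ D E : ℤ, 0 < D ∧ ∃ α ∈ T, ∃ β ∈ T, α ≠ β ∧
      (∀ γ ∈ T, D * la α + E * lb α ≤ D * la γ + E * lb γ) ∧
      (∀ γ ∈ T, D * la β + E * lb β ≤ D * la γ + E * lb γ) := by
  classical
  obtain ⟨s₁, hs₁, s₂, hs₂, hss⟩ := hlb
  obtain ⟨α₀, hα₀, hmin⟩ := T.exists_min_image la ⟨s₁, hs₁⟩
  by_cases hsec : ∃ β ∈ T, β ≠ α₀ ∧ la β = la α₀
  · obtain ⟨β, hβ, hβne, hβval⟩ := hsec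
    refine ⟨1, 0, one_pos, α₀, hα₀, β, hβ, Ne.symm hβne, ?_, ?_⟩
    · intro γ hγ
      simpa using hmin γ hγ
    · intro γ hγ
      simp only [one_mul, zero_mul, add_zero, hβval]
      exact hmin γ hγ
  · push_neg at hsec
    have hstrict : ∀ β ∈ T, β ≠ α₀ → la α₀ < la β := by
      intro β hβ hne
      exact lt_of_le_of_ne (hmin β hβ) (Ne.symm (hsec β hβ hne))
    -- the filtered set of points with differing lb value
    set S' := T.filter (fun t => lb t ≠ lb α₀) with hS'
    have hS'ne : S'.Nonempty := by
      rcases eq_or_ne (lb s₁) (lb α₀) with h | h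
      · exact ⟨s₂, Finset.mem_filter.mpr ⟨hs₂, by rw [← h]; exact (Ne.symm hss)⟩⟩
      · exact ⟨s₁, Finset.mem_filter.mpr ⟨hs₁, h⟩⟩
    obtain ⟨t, ht, htmin⟩ := S'.exists_min_image
      (fun u => ((la u - la α₀ : ℤ) : ℚ) / |(lb α₀ - lb u : ℤ)|) hS'ne
    obtain ⟨htT, htlb⟩ := Finset.mem_filter.mp ht
    have htne : t ≠ α₀ := fun h => htlb (by rw [h])
    set N := la t - la α₀ with hN
    set Dt := lb α₀ - lb t with hDt
    have hNpos : 0 < N := sub_pos.mpr (hstrict t htT htne)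
    have hDtne : Dt ≠ 0 := sub_ne_zero.mpr (Ne.symm htlb)
    set D := |Dt| with hD
    have hDpos : 0 < D := abs_pos.mpr hDtne
    set E := if 0 < Dt then N else -N with hE
    have hEDt : E * Dt = D * N := by
      rcases lt_or_ge 0 Dt with h | h
      · rw [hE, if_pos h, hD, abs_of_pos h]; ring
      · have hlt : Dt < 0 := lt_of_le_of_ne h hDtne
        rw [hE, if_neg (not_lt.mpr h), hD, abs_of_neg hlt]; ring
    have habsE : |E| = N := by
      rcases lt_or_ge 0 Dt with h | h
      · rw [hE, if_pos h, abs_of_pos hNpos]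
      · rw [hE, if_neg (not_lt.mpr h), abs_neg, abs_of_pos hNpos]
    have hvalt : D * la t + E * lb t = D * la α₀ + E * lb α₀ := by
      have : D * (la t - la α₀) = E * (lb α₀ - lb t) := by rw [← hN, ← hDt, hEDt]
      linarith [this]
    have hminall : ∀ γ ∈ T, D * la α₀ + E * lb α₀ ≤ D * la γ + E * lb γ := by
      intro γ hγ
      rcases eq_or_ne (lb γ) (lb α₀) with h | h
      · have : D * la α₀ ≤ D * la γ := mul_le_mul_of_nonneg_left (hmin γ hγ) (le_of_lt hDpos)
        rw [h]; linarith
      · have hγS' : γ ∈ S' := Finset.mem_filter.mpr ⟨hγ, h⟩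
        have hγne : γ ≠ α₀ := fun hh => h (by rw [hh])
        set Nγ := la γ - la α₀ with hNγ
        set Dγ := lb α₀ - lb γ with hDγ
        have hNγpos : 0 < Nγ := sub_pos.mpr (hstrict γ hγ hγne)
        have hDγne : Dγ ≠ 0 := sub_ne_zero.mpr (Ne.symm h)
        have hkey : (N:ℚ) / (D:ℚ) ≤ ((la γ - la α₀ : ℤ) : ℚ) / ((|lb α₀ - lb γ| : ℤ) : ℚ) :=
          htmin γ hγS'
        have hcross : N * |Dγ| ≤ Nγ * D := by
          have h1 : (0:ℚ) < (D : ℚ) := by exact_mod_cast hDpos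
          have h2 : (0:ℚ) < ((|lb α₀ - lb γ| : ℤ) : ℚ) := by
            exact_mod_cast abs_pos.mpr (sub_ne_zero.mpr (Ne.symm h))
          rw [div_le_div_iff₀ h1 h2] at hkey
          rw [hNγ, hDγ]
          exact_mod_cast hkey
        have hED : E * Dγ ≤ N * |Dγ| := by
          calc E * Dγ ≤ |E * Dγ| := le_abs_self _
            _ = N * |Dγ| := by rw [abs_mul, habsE]
        have : E * Dγ ≤ Nγ * D := le_trans hED hcross
        have hexp : D * (la γ - la α₀) ≥ E * (lb α₀ - lb γ) := by
          rw [← hNγ, ← hDγ]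
          calc E * Dγ ≤ Nγ * D := this
            _ = D * Nγ := by ring
        linarith [hexp]
    refine ⟨D, E, hDpos, α₀, hα₀, t, htT, Ne.symm htne, hminall, fun γ hγ => ?_⟩
    rw [hvalt]
    exact hminall γ hγ

lemma sub_pInit_gt (v : Fin 3 → ℤ) {G : MvPolynomial (Fin 3) ℂ} {αm : Fin 3 →₀ ℕ}
    (hαm : αm ∈ minSet v G) :
    ∀ α ∈ (G - pInit v G).support, zwdeg v αm < zwdeg v α := by
  intro α hα
  have h := MvPolynomial.mem_support_iff.mp hα
  rw [coeff_sub_pInit] at h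
  by_cases hm : α ∈ minSet v G
  · rw [if_pos hm] at h; exact absurd rfl h
  · rw [if_neg hm] at h
    have hαs : α ∈ G.support := MvPolynomial.mem_support_iff.mpr h
    rcases lt_or_eq_of_le (minSet_min v hαm α hαs) with h1 | h1
    · exact h1
    · exact absurd ((mem_minSet_iff v hαm).mpr ⟨hαs, h1.symm⟩) hm

lemma zwdeg_vW (w1 w2 : ℤ) (γ : Fin 3 →₀ ℕ) :
    zwdeg ![0, w1, w2] γ = w1 * (γ 1 : ℤ) + w2 * (γ 2 : ℤ) := by
  unfold zwdeg
  rw [Fin.sum_univ_three]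
  simp

lemma homog_sum {G : MvPolynomial (Fin 3) ℂ} {n : ℕ} (h : G.IsHomogeneous n) :
    ∀ γ ∈ G.support, γ 0 + γ 1 + γ 2 = n := by
  intro γ hγ
  have := h (MvPolynomial.mem_support_iff.mp hγ)
  simp only [Finsupp.weight_apply, Pi.one_apply, smul_eq_mul, mul_one] at this
  rw [Finsupp.sum_fintype _ _ (fun _ => rfl), Fin.sum_univ_three] at this
  exact this

lemma homog_inj {G : MvPolynomial (Fin 3) ℂ} {n : ℕ} (h : G.IsHomogeneous n)
    {α β : Fin 3 →₀ ℕ} (hα : α ∈ G.support) (hβ : β ∈ G.support)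
    (h1 : α 1 = β 1) (h2 : α 2 = β 2) : α = β := by
  have s1 := homog_sum h α hα
  have s2 := homog_sum h β hβ
  have h0 : α 0 = β 0 := by omega
  ext i
  fin_cases i
  · exact h0
  · exact h1
  · exact h2

lemma newton_collinear_of_subsingleton {F : MvPolynomial (Fin 3) ℂ}
    (h : ∀ α ∈ F.support, ∀ β ∈ F.support, α = β) : Collinear ℝ (newtonPolytope3 F) := by
  rcases F.support.eq_empty_or_nonempty with he | ⟨σ₀, hσ₀⟩
  · unfold newtonPolytope3
    rw [he]
    simp only [Finset.coe_empty, Set.image_empty, convexHull_empty]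
    exact collinear_empty ℝ _
  · set pt : (Fin 3 →₀ ℕ) → (Fin 3 → ℝ) := fun α i => ((α i : ℕ) : ℝ) with hpt
    have hsub : newtonPolytope3 F ⊆ {pt σ₀} := by
      unfold newtonPolytope3
      rw [show (fun (α : Fin 3 →₀ ℕ) (i : Fin 3) => ((α i : ℕ) : ℝ)) = pt from rfl]
      apply convexHull_min ?_ (convex_singleton _)
      rintro x ⟨β, hβ, rfl⟩
      rw [h β hβ σ₀ hσ₀]
      rfl
    exact (collinear_singleton ℝ (pt σ₀)).subset hsub

lemma newton_collinear_of_line {F : MvPolynomial (Fin 3) ℂ} {w1 w2 : ℝ}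
    (hw : ¬(w1 = 0 ∧ w2 = 0)) {m s : ℝ}
    (hsup : ∀ α ∈ F.support,
      w1 * (α 1 : ℝ) + w2 * (α 2 : ℝ) = m ∧ ((α 0 : ℝ) + (α 1 : ℝ) + (α 2 : ℝ) = s)) :
    Collinear ℝ (newtonPolytope3 F) := by
  rcases F.support.eq_empty_or_nonempty with he | ⟨σ₀, hσ₀⟩
  · unfold newtonPolytope3
    rw [he]
    simp only [Finset.coe_empty, Set.image_empty, convexHull_empty]
    exact collinear_empty ℝ _
  · set pt : (Fin 3 →₀ ℕ) → (Fin 3 → ℝ) := fun α i => ((α i : ℕ) : ℝ) with hpt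
    set Λ : Set (Fin 3 → ℝ) :=
      {x | w1 * x 1 + w2 * x 2 = m} ∩ {x | x 0 + x 1 + x 2 = s} with hΛ
    have hconv : Convex ℝ Λ := by
      apply Convex.inter
      · exact convex_hyperplane (⟨fun x y => by simp; ring, fun r x => by simp; ring⟩ :
          IsLinearMap ℝ (fun x : Fin 3 → ℝ => w1 * x 1 + w2 * x 2)) m
      · exact convex_hyperplane (⟨fun x y => by simp; ring, fun r x => by simp; ring⟩ :
          IsLinearMap ℝ (fun x : Fin 3 → ℝ => x 0 + x 1 + x 2)) s
    have hNsub : newtonPolytope3 F ⊆ Λ := by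
      unfold newtonPolytope3
      apply convexHull_min ?_ hconv
      rintro x ⟨β, hβ, rfl⟩
      exact ⟨(hsup β hβ).1, (hsup β hβ).2⟩
    have hx₀ : pt σ₀ ∈ newtonPolytope3 F :=
      subset_convexHull ℝ _ ⟨σ₀, Finset.mem_coe.mpr hσ₀, rfl⟩
    rw [collinear_iff_of_mem hx₀]
    refine ⟨ldir w1 w2, fun p hp => ?_⟩
    obtain ⟨hp1, hp2⟩ := hNsub hp
    obtain ⟨h01, h02⟩ := hNsub hx₀
    refine ⟨tcoord w1 w2 (pt σ₀) p, ?_⟩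
    have hlp := lineParam hw h01 h02 hp1 hp2
    conv_lhs => rw [hlp]
    funext i
    simp only [Pi.add_apply, Pi.vadd_apply, vadd_eq_add]
    ring

theorem stmt_5 (F P R : MvPolynomial (Fin 3) ℂ) (a : ℕ) (ha : 0 < a) (c : ℂ)
    (hF : F.IsHomogeneous a) (hP : ∃ dP, P.IsHomogeneous dP) (hR : ∃ dR, R.IsHomogeneous dR)
    (hPm : ¬ IsMonP3 P)
    (heq : F = P ^ 2 * R + MvPolynomial.C c * MvPolynomial.X 0 ^ a)
    (hdim : ¬ Collinear ℝ (newtonPolytope3 F)) :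
    ∃ v : Fin 3 → ℤ, v ≠ 0 ∧
      (∃ p q : Fin 3 → ℝ, p ≠ q ∧ faceOf v (newtonPolytope3 F) = segment ℝ p q) ∧
      pInit v F = (pInit v P) ^ 2 * pInit v R ∧ ¬ IsMonP3 (pInit v P) := by
  classical
  have hPcard : ∃ α ∈ P.support, ∃ β ∈ P.support, α ≠ β := (not_isMon_iff P).mp hPm
  have hP0 : P ≠ 0 := by
    rintro rfl
    obtain ⟨α, hα, -⟩ := hPcard
    simp at hα
  obtain ⟨dP, hPhom⟩ := hP
  obtain ⟨dR, hRhom⟩ := hR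
  set e : Fin 3 →₀ ℕ := Finsupp.single 0 a with he
  have hCX : (MvPolynomial.C c * MvPolynomial.X 0 ^ a : MvPolynomial (Fin 3) ℂ)
      = MvPolynomial.monomial e c := by
    rw [MvPolynomial.X_pow_eq_monomial, MvPolynomial.C_mul_monomial, mul_one]
  have he1 : e 1 = 0 := by simp [he, Finsupp.single_apply]
  have he2 : e 2 = 0 := by simp [he, Finsupp.single_apply]
  have hR0 : R ≠ 0 := by
    rintro rfl
    apply hdim
    apply newton_collinear_of_subsingleton
    have hFm : F = MvPolynomial.monomial e c := by rw [heq, hCX]; ring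
    intro α hα β hβ
    rw [hFm, MvPolynomial.support_monomial] at hα hβ
    by_cases hc : c = 0
    · rw [if_pos hc] at hα
      exact absurd hα (Finset.notMem_empty α)
    · rw [if_neg hc] at hα hβ
      rw [Finset.mem_singleton.mp hα, Finset.mem_singleton.mp hβ]
  have hPR0 : P^2*R ≠ 0 := mul_ne_zero (pow_ne_zero 2 hP0) hR0
  have hF0 : F ≠ 0 := by
    rintro rfl
    exact hdim (newton_collinear_of_subsingleton (by simp))
  have hPRhom : (P^2*R).IsHomogeneous (dP*2 + dR) := (hPhom.pow 2).mul hRhom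
  have hcoeffF : ∀ γ, γ ≠ e → MvPolynomial.coeff γ F = MvPolynomial.coeff γ (P^2*R) := by
    intro γ hγ
    rw [heq, MvPolynomial.coeff_add, hCX, MvPolynomial.coeff_monomial,
      if_neg (fun h => hγ h.symm), add_zero]
  have hPRnm : ¬ IsMonP3 (P^2*R) := by
    have hrw : P^2*R = P*(P*R) := by ring
    rw [hrw]
    exact not_isMon_mul hPm (mul_ne_zero hP0 hR0)
  obtain ⟨γ₁, hγ₁, γ₂, hγ₂, hγne⟩ := (not_isMon_iff _).mp hPRnm
  have hgamma : ∃ γ ∈ (P^2*R).support, ¬(γ 1 = 0 ∧ γ 2 = 0) := by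
    by_contra hc
    push_neg at hc
    obtain ⟨h11, h12⟩ := hc γ₁ hγ₁
    obtain ⟨h21, h22⟩ := hc γ₂ hγ₂
    exact hγne (homog_inj hPRhom hγ₁ hγ₂ (by omega) (by omega))
  obtain ⟨γs, hγs, hγsne⟩ := hgamma
  set a1 : ℤ := (γs 1 : ℤ) with ha1
  set a2 : ℤ := (γs 2 : ℤ) with ha2
  have haz : ¬(a1 = 0 ∧ a2 = 0) := by
    rintro ⟨h1, h2⟩
    rw [ha1] at h1
    rw [ha2] at h2
    exact hγsne ⟨by exact_mod_cast h1, by exact_mod_cast h2⟩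
  have hQpos : 0 < a1^2 + a2^2 := by
    rcases not_and_or.mp haz with h | h
    · nlinarith [pow_two_pos_of_ne_zero h, sq_nonneg a2]
    · nlinarith [pow_two_pos_of_ne_zero h, sq_nonneg a1]
  have KEY : ∃ w1 w2 : ℤ, ¬(w1 = 0 ∧ w2 = 0) ∧
      (∃ γw ∈ (P^2*R).support, w1 * (γw 1 : ℤ) + w2 * (γw 2 : ℤ) < 0) ∧
      ∃ α ∈ P.support, ∃ β ∈ P.support, α ≠ β ∧
        (∀ δ ∈ P.support, w1 * (α 1 : ℤ) + w2 * (α 2 : ℤ) ≤ w1 * (δ 1 : ℤ) + w2 * (δ 2 : ℤ)) ∧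
        (∀ δ ∈ P.support, w1 * (β 1 : ℤ) + w2 * (β 2 : ℤ) ≤ w1 * (δ 1 : ℤ) + w2 * (δ 2 : ℤ)) := by
    set la : (Fin 3 →₀ ℕ) → ℤ := fun γ => -(a1 * (γ 1 : ℤ) + a2 * (γ 2 : ℤ)) with hla
    set lb : (Fin 3 →₀ ℕ) → ℤ := fun γ => -a2 * (γ 1 : ℤ) + a1 * (γ 2 : ℤ) with hlb
    by_cases hconst : ∀ α ∈ P.support, ∀ β ∈ P.support, lb α = lb β
    · -- lb is constant on the support of P
      by_cases hneg : ∃ γ ∈ (P^2*R).support, (-a2) * (γ 1 : ℤ) + a1 * (γ 2 : ℤ) < 0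
      · obtain ⟨α, hα, β, hβ, hab⟩ := hPcard
        refine ⟨-a2, a1, ?_, hneg, α, hα, β, hβ, hab, ?_, ?_⟩
        · rintro ⟨h1, h2⟩
          exact haz ⟨h2, by omega⟩
        · intro δ hδ
          have h := hconst α hα δ hδ
          simp only [hlb] at h
          linarith
        · intro δ hδ
          have h := hconst β hβ δ hδ
          simp only [hlb] at h
          linarith
      · by_cases hpos : ∃ γ ∈ (P^2*R).support, a2 * (γ 1 : ℤ) + (-a1) * (γ 2 : ℤ) < 0
        · obtain ⟨α, hα, β, hβ, hab⟩ := hPcard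
          refine ⟨a2, -a1, ?_, hpos, α, hα, β, hβ, hab, ?_, ?_⟩
          · rintro ⟨h1, h2⟩
            exact haz ⟨by omega, h1⟩
          · intro δ hδ
            have h := hconst α hα δ hδ
            simp only [hlb] at h
            linarith
          · intro δ hδ
            have h := hconst β hβ δ hδ
            simp only [hlb] at h
            linarith
        · exfalso
          apply hdim
          push_neg at hneg hpos
          have hzero : ∀ γ ∈ (P^2*R).support, (-a2) * (γ 1 : ℤ) + a1 * (γ 2 : ℤ) = 0 := by
            intro γ hγ
            have h1 := hneg γ hγ
            have h2 := hpos γ hγ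
            linarith
          apply newton_collinear_of_line (w1 := ((-a2 : ℤ) : ℝ)) (w2 := ((a1 : ℤ) : ℝ))
            (m := 0) (s := (a : ℝ))
          · rintro ⟨h1, h2⟩
            refine haz ⟨by exact_mod_cast h2, ?_⟩
            have : ((a2 : ℤ) : ℝ) = 0 := by push_cast at h1 ⊢; linarith
            exact_mod_cast this
          · intro α hα
            constructor
            · by_cases hae : α = e
              · subst hae
                rw [he1, he2]
                push_cast
                ring
              · have hmem : α ∈ (P^2*R).support := by
                  rw [MvPolynomial.mem_support_iff, ← hcoeffF α hae]
                  exact MvPolynomial.mem_support_iff.mp hα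
                have := hzero α hmem
                push_cast
                exact_mod_cast congrArg (fun z : ℤ => (z : ℝ)) this
            · have := homog_sum hF α hα
              exact_mod_cast this
    · push_neg at hconst
      obtain ⟨s₁, hs₁, s₂, hs₂, hss⟩ := hconst
      obtain ⟨D, E, hD, α, hα, β, hβ, hab, hminα, hminβ⟩ :=
        pencil P.support la lb ⟨s₁, hs₁, s₂, hs₂, hss⟩
      have idA : ∀ γ : Fin 3 →₀ ℕ,
          (-D*a1 - E*a2) * (γ 1 : ℤ) + (-D*a2 + E*a1) * (γ 2 : ℤ) = D * la γ + E * lb γ := by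
        intro γ
        simp only [hla, hlb]
        ring
      have hγsval : (-D*a1 - E*a2) * (γs 1 : ℤ) + (-D*a2 + E*a1) * (γs 2 : ℤ)
          = -(D*(a1^2+a2^2)) := by
        rw [← ha1, ← ha2]
        ring
      have hγsneg : (-D*a1 - E*a2) * (γs 1 : ℤ) + (-D*a2 + E*a1) * (γs 2 : ℤ) < 0 := by
        rw [hγsval]
        have := mul_pos hD hQpos
        linarith
      refine ⟨-D*a1 - E*a2, -D*a2 + E*a1, ?_, ⟨γs, hγs, hγsneg⟩, α, hα, β, hβ, hab, ?_, ?_⟩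
      · rintro ⟨h1, h2⟩
        rw [h1, h2] at hγsneg
        simp at hγsneg
      · intro δ hδ
        rw [idA α, idA δ]
        exact hminα δ hδ
      · intro δ hδ
        rw [idA β, idA δ]
        exact hminβ δ hδ
  obtain ⟨w1, w2, hwz, ⟨γw, hγw, hγwneg⟩, α, hαP, β, hβP, hαβ, hminα, hminβ⟩ := KEY
  set v : Fin 3 → ℤ := ![0, w1, w2] with hv
  have hzw : ∀ γ : Fin 3 →₀ ℕ, zwdeg v γ = w1 * (γ 1 : ℤ) + w2 * (γ 2 : ℤ) :=
    fun γ => zwdeg_vW w1 w2 γ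
  have hvne : v ≠ 0 := by
    intro h
    have h1 := congrFun h 1
    have h2 := congrFun h 2
    simp [hv] at h1 h2
    exact hwz ⟨h1, h2⟩
  have hαm : α ∈ minSet v P :=
    Finset.mem_filter.mpr ⟨hαP, fun γ hγ => by rw [hzw, hzw]; exact hminα γ hγ⟩
  have hβm : β ∈ minSet v P :=
    Finset.mem_filter.mpr ⟨hβP, fun γ hγ => by rw [hzw, hzw]; exact hminβ γ hγ⟩
  have hPinm : ¬ IsMonP3 (pInit v P) := by
    rw [not_isMon_iff]
    exact ⟨α, by rw [support_pInit]; exact hαm, β, by rw [support_pInit]; exact hβm, hαβ⟩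
  have hPRinit : pInit v (P^2*R) = (pInit v P)^2 * pInit v R := by
    have h1 : P^2*R = P*(P*R) := by ring
    rw [h1, pInit_mul v hP0 (mul_ne_zero hP0 hR0), pInit_mul v hP0 hR0]
    ring
  obtain ⟨αm, hαmPR⟩ := minSet_nonempty v hPR0
  have hdneg : zwdeg v αm < 0 := by
    have h1 : zwdeg v αm ≤ zwdeg v γw := minSet_min v hαmPR γw hγw
    have h2 : zwdeg v γw < 0 := by rw [hzw]; exact hγwneg
    exact lt_of_le_of_lt h1 h2
  have hFinit : pInit v F = pInit v (P^2*R) := by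
    apply pInit_eq_of_decomp v (A := pInit v (P^2*R))
      (B := (P^2*R - pInit v (P^2*R)) + MvPolynomial.monomial e c)
      (by rw [heq, hCX]; ring) (pInit_ne_zero v hPR0) (zwdeg v αm)
    · intro γ hγ
      rw [support_pInit] at hγ
      exact ((mem_minSet_iff v hαmPR).mp hγ).2
    · intro γ hγ
      rcases Finset.mem_union.mp (MvPolynomial.support_add hγ) with h1 | h1
      · exact sub_pInit_gt v hαmPR γ h1
      · rw [MvPolynomial.support_monomial] at h1
        have hγe : γ = e := by
          split at h1
          · exact absurd h1 (Finset.notMem_empty γ)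
          · exact Finset.mem_singleton.mp h1
        subst hγe
        rw [hzw e, he1, he2]
        simpa using hdneg
  have hgoal3 : pInit v F = (pInit v P)^2 * pInit v R := hFinit.trans hPRinit
  have hFnm : ¬ IsMonP3 (pInit v F) := by
    rw [hgoal3,
      show (pInit v P)^2 * pInit v R = (pInit v P) * ((pInit v P) * (pInit v R)) from by ring]
    exact not_isMon_mul hPinm (mul_ne_zero (pInit_ne_zero v hP0) (pInit_ne_zero v hR0))
  obtain ⟨μ, hμ, ν, hν, hμν⟩ := (not_isMon_iff _).mp hFnm
  rw [support_pInit] at hμ hν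
  refine ⟨v, hvne, ?_, hgoal3, hPinm⟩
  set pt : (Fin 3 →₀ ℕ) → (Fin 3 → ℝ) := fun α i => ((α i : ℕ) : ℝ) with hpt
  have hptinj : ∀ γ δ : Fin 3 →₀ ℕ, pt γ = pt δ → γ = δ := by
    intro γ δ h
    ext i
    have := congrFun h i
    simp only [hpt] at this
    exact_mod_cast this
  set s : Finset (Fin 3 → ℝ) := F.support.image pt with hs
  have hsne : s.Nonempty := Finset.image_nonempty.mpr (MvPolynomial.support_nonempty.mpr hF0)
  have hNP : newtonPolytope3 F = convexHull ℝ (↑s : Set (Fin 3 → ℝ)) := by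
    unfold newtonPolytope3
    rw [hs, Finset.coe_image]
  have hLpt : ∀ γ : Fin 3 →₀ ℕ, (∑ i, (v i : ℝ) * pt γ i) = ((zwdeg v γ : ℤ) : ℝ) := by
    intro γ
    unfold zwdeg
    push_cast
    rfl
  have hfilt : s.filter (fun x => ∀ y ∈ s, (∑ i, (v i:ℝ) * x i) ≤ ∑ i, (v i:ℝ) * y i)
      = (minSet v F).image pt := by
    rw [hs, Finset.filter_image]
    congr 1
    show F.support.filter _ = F.support.filter _
    apply Finset.filter_congr
    intro γ hγ
    constructor
    · intro h δ hδ
      have h2 := h (pt δ) (Finset.mem_image_of_mem pt hδ)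
      rw [hLpt, hLpt] at h2
      exact_mod_cast h2
    · intro h y hy
      obtain ⟨δ, hδ, rfl⟩ := Finset.mem_image.mp hy
      rw [hLpt, hLpt]
      exact_mod_cast h δ hδ
  rw [hNP, faceOf_hull v s hsne, hfilt]
  have hW : ¬((w1 : ℝ) = 0 ∧ (w2 : ℝ) = 0) := by
    rintro ⟨h1, h2⟩
    exact hwz ⟨by exact_mod_cast h1, by exact_mod_cast h2⟩
  apply hull_segment hW _ (pt μ)
  · intro x hx
    obtain ⟨δ, hδ, rfl⟩ := Finset.mem_image.mp hx
    have hδF : δ ∈ F.support := minSet_subset v F hδ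
    have hμF : μ ∈ F.support := minSet_subset v F hμ
    apply lineParam hW (m := (w1:ℝ) * pt μ 1 + (w2:ℝ) * pt μ 2) (s := (a : ℝ)) rfl
    · have := homog_sum hF μ hμF
      simp only [hpt]
      exact_mod_cast this
    · have hzeq : zwdeg v δ = zwdeg v μ := ((mem_minSet_iff v hμ).mp hδ).2
      rw [hzw, hzw] at hzeq
      simp only [hpt]
      exact_mod_cast hzeq
    · have := homog_sum hF δ hδF
      simp only [hpt]
      exact_mod_cast this
  · exact ⟨pt μ, Finset.mem_image_of_mem pt hμ, pt ν, Finset.mem_image_of_mem pt hν,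
      fun h => hμν (hptinj _ _ h)⟩
end
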